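/- For any twin cotorsion pair ((S,T),(U,V)) on an extriangulated category B, the heart H̲ = (B^+ ∩ B^-)/W is a preabelian category: every morphism in H̲ has a kernel and a cokernel. -/

import Mathlib

namespace ExtriHearts

open CategoryTheory CategoryTheory.Limits Opposite

attribute [local instance] CategoryTheory.Limits.hasBinaryBiproducts_of_finite_biproducts

universe v u v₂ u₂

section IdealQuotient

variable {D : Type u₂} [Category.{v₂} D] [Preadditive D]

/-- The subgroup of morphisms `X ⟶ Y` generated by those factoring through an object of `W`. -/
def wIdeal (W : Set D) (X Y : D) : AddSubgroup (X ⟶ Y) :=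
  AddSubgroup.closure {f : X ⟶ Y | ∃ Z ∈ W, ∃ p : X ⟶ Z, ∃ q : Z ⟶ Y, f = p ≫ q}

/-- The hom relation on `D` identifying morphisms whose difference lies in the ideal
generated by morphisms factoring through an object of `W`.  (For an additively closed
subcategory `W` this is the usual relation "`f - g` factors through an object of `W`".) -/
def wRel (W : Set D) : HomRel D := fun {X Y} f g => f - g ∈ wIdeal W X Y

lemma comp_left_mem_wIdeal (W : Set D) {X Y Z : D} (f : X ⟶ Y) {g : Y ⟶ Z}
    (hg : g ∈ wIdeal W Y Z) : f ≫ g ∈ wIdeal W X Z := by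
  have hle : wIdeal W Y Z ≤ (wIdeal W X Z).comap (Preadditive.leftComp Z f) := by
    rw [wIdeal, AddSubgroup.closure_le]
    rintro g ⟨Z₀, hZ₀, p, q, rfl⟩
    exact AddSubgroup.subset_closure ⟨Z₀, hZ₀, f ≫ p, q, by
      simp [Preadditive.leftComp]⟩
  simpa [Preadditive.leftComp] using hle hg

lemma comp_right_mem_wIdeal (W : Set D) {X Y Z : D} {f : X ⟶ Y} (g : Y ⟶ Z)
    (hf : f ∈ wIdeal W X Y) : f ≫ g ∈ wIdeal W X Z := by
  have hle : wIdeal W X Y ≤ (wIdeal W X Z).comap (Preadditive.rightComp X g) := by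
    rw [wIdeal, AddSubgroup.closure_le]
    rintro f ⟨Z₀, hZ₀, p, q, rfl⟩
    exact AddSubgroup.subset_closure ⟨Z₀, hZ₀, p, q ≫ g, by
      simp [Preadditive.rightComp]⟩
  simpa [Preadditive.rightComp] using hle hf

instance wRel_congruence (W : Set D) : Congruence (wRel W) where
  equivalence :=
    { refl := fun f => by
        show f - f ∈ wIdeal W _ _
        simp only [sub_self]
        exact zero_mem _
      symm := fun {f g} h => by
        have h' : f - g ∈ wIdeal W _ _ := h
        show g - f ∈ wIdeal W _ _
        simpa only [neg_sub] using neg_mem h'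
      trans := fun {f g h} h₁ h₂ => by
        have h₁' : f - g ∈ wIdeal W _ _ := h₁
        have h₂' : g - h ∈ wIdeal W _ _ := h₂
        show f - h ∈ wIdeal W _ _
        simpa only [sub_add_sub_cancel] using add_mem h₁' h₂' }
  comp_left := fun {X Y Z} f {g g'} h => by
    have h' : g - g' ∈ wIdeal W _ _ := h
    show f ≫ g - f ≫ g' ∈ wIdeal W _ _
    simpa only [← Preadditive.comp_sub] using comp_left_mem_wIdeal W f h'
  comp_right := fun {X Y Z} {f f'} g h => by
    have h' : f - f' ∈ wIdeal W _ _ := h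
    show f ≫ g - f' ≫ g ∈ wIdeal W _ _
    simpa only [← Preadditive.sub_comp] using comp_right_mem_wIdeal W g h'

/-- The quotient of a preadditive category by (the ideal generated by) the morphisms factoring
through a class of objects `W`. -/
abbrev QuotCat (W : Set D) := CategoryTheory.Quotient (wRel W)

/-- The canonical quotient functor. -/
abbrev toQuot (W : Set D) : D ⥤ QuotCat W := Quotient.functor _

instance quotCatPreadditive (W : Set D) : Preadditive (QuotCat W) :=
  Quotient.preadditive _ (fun X Y f₁ f₂ g₁ g₂ h₁ h₂ => by
    have h₁' : f₁ - f₂ ∈ wIdeal W X Y := h₁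
    have h₂' : g₁ - g₂ ∈ wIdeal W X Y := h₂
    show f₁ + g₁ - (f₂ + g₂) ∈ wIdeal W X Y
    have heq : f₁ + g₁ - (f₂ + g₂) = f₁ - f₂ + (g₁ - g₂) := by abel
    rw [heq]
    exact add_mem h₁' h₂')

end IdealQuotient

section ExtCat

/-- The data of an additive `Ab`-valued bifunctor together with a realization predicate:
`realize δ x y` means that the 3-term sequence `A --x--> X --y--> C` realizes the
`E`-extension `δ ∈ E(C,A)`, i.e. belongs to the equivalence class `s(δ)`. -/
structure PreExtStruct (B : Type u) [Category.{v} B] [Preadditive B] where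
  /-- The additive bifunctor `E : Bᵒᵖ × B → Ab`. -/
  E : Bᵒᵖ ⥤ B ⥤ AddCommGrpCat.{v}

namespace PreExtStruct

variable {B : Type u} [Category.{v} B] [Preadditive B]

/-- The abelian group `E(C,A)` of `E`-extensions of `C` by `A`. -/
abbrev Ext (σ : PreExtStruct B) (C A : B) : AddCommGrpCat.{v} := (σ.E.obj (op C)).obj A

/-- `a_* δ`, the pushforward of an `E`-extension along `a : A ⟶ A'`. -/
def push (σ : PreExtStruct B) {C A A' : B} (a : A ⟶ A') (δ : σ.Ext C A) : σ.Ext C A' :=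
  (σ.E.obj (op C)).map a δ

/-- `c^* δ`, the pullback of an `E`-extension along `c : C' ⟶ C`. -/
def pull (σ : PreExtStruct B) {C' C A : B} (c : C' ⟶ C) (δ : σ.Ext C A) : σ.Ext C' A :=
  (σ.E.map c.op).app A δ

/-- The direct sum `δ ⊕ δ'` of two `E`-extensions, i.e. the element of
`E(C ⊞ C', A ⊞ A')` corresponding to `(δ, 0, 0, δ')`. -/
noncomputable def sumExt (σ : PreExtStruct B) [HasBinaryBiproducts B] {C C' A A' : B}
    (δ : σ.Ext C A) (δ' : σ.Ext C' A') : σ.Ext (C ⊞ C') (A ⊞ A') :=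
  σ.push biprod.inl (σ.pull biprod.fst δ) + σ.push biprod.inr (σ.pull biprod.snd δ')

end PreExtStruct

/-- An *extriangulated category* structure `(E, s)` on an additive category `B`, consisting of
an additive bifunctor `E : Bᵒᵖ × B → Ab` and an additive realization `s` of `E` (encoded by the
predicate `realize`), subject to the axioms (ET1), (ET2), (ET3), (ET3)ᵒᵖ, (ET4), (ET4)ᵒᵖ of
Nakaoka–Palu. -/
structure ExtStruct (B : Type u) [Category.{v} B] [Preadditive B] [HasFiniteBiproducts B]
    extends PreExtStruct B where
  /-- (ET1) `E` is additive in the second variable. -/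
  additive_fst : ∀ Cop : Bᵒᵖ, (E.obj Cop).Additive
  /-- (ET1) `E` is additive in the first variable. -/
  additive_snd : ∀ A : B, (E.flip.obj A).Additive
  /-- `realize δ x y` means the sequence `A --x--> X --y--> C` realizes `δ`, i.e. it belongs to
  the equivalence class `s(δ)`. -/
  realize : ∀ ⦃A C : B⦄, toPreExtStruct.Ext C A → ∀ ⦃X : B⦄, (A ⟶ X) → (X ⟶ C) → Prop
  /-- Every `E`-extension is realized by some sequence. -/
  realize_ex : ∀ ⦃A C : B⦄ (δ : toPreExtStruct.Ext C A),
      ∃ (X : B) (x : A ⟶ X) (y : X ⟶ C), realize δ x y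
  /-- `s(δ)` is closed under the equivalence of sequences. -/
  realize_iso : ∀ ⦃A C X X' : B⦄ (δ : toPreExtStruct.Ext C A) (x : A ⟶ X) (y : X ⟶ C)
      (b : X ≅ X'), realize δ x y → realize δ (x ≫ b.hom) (b.inv ≫ y)
  /-- Any two realizations of `δ` are equivalent sequences. -/
  realize_unique : ∀ ⦃A C X X' : B⦄ (δ : toPreExtStruct.Ext C A) (x : A ⟶ X) (y : X ⟶ C)
      (x' : A ⟶ X') (y' : X' ⟶ C), realize δ x y → realize δ x' y' →
      ∃ b : X ≅ X', x ≫ b.hom = x' ∧ b.hom ≫ y' = y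
  /-- (ET2)(∗) Any morphism of `E`-extensions is realized by a morphism of sequences. -/
  realize_map : ∀ ⦃A C A' C' X X' : B⦄ (δ : toPreExtStruct.Ext C A) (δ' : toPreExtStruct.Ext C' A')
      (x : A ⟶ X) (y : X ⟶ C) (x' : A' ⟶ X') (y' : X' ⟶ C') (a : A ⟶ A') (c : C ⟶ C'),
      realize δ x y → realize δ' x' y' →
      toPreExtStruct.push a δ = toPreExtStruct.pull c δ' →
      ∃ b : X ⟶ X', x ≫ b = a ≫ x' ∧ y ≫ c = b ≫ y'
  /-- (ET2)(i) The split extension is realized by the split sequence. -/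
  realize_zero : ∀ A C : B,
      realize (0 : toPreExtStruct.Ext C A) (biprod.inl : A ⟶ A ⊞ C) (biprod.snd : A ⊞ C ⟶ C)
  /-- (ET2)(ii) Realization is additive. -/
  realize_sum : ∀ ⦃A C A' C' X X' : B⦄ (δ : toPreExtStruct.Ext C A)
      (δ' : toPreExtStruct.Ext C' A') (x : A ⟶ X) (y : X ⟶ C) (x' : A' ⟶ X') (y' : X' ⟶ C'),
      realize δ x y → realize δ' x' y' →
      realize (toPreExtStruct.sumExt δ δ') (biprod.map x x') (biprod.map y y')
  /-- (ET3) -/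
  et3 : ∀ ⦃A C A' C' X X' : B⦄ (δ : toPreExtStruct.Ext C A) (δ' : toPreExtStruct.Ext C' A')
      (x : A ⟶ X) (y : X ⟶ C) (x' : A' ⟶ X') (y' : X' ⟶ C'),
      realize δ x y → realize δ' x' y' → ∀ (a : A ⟶ A') (b : X ⟶ X'), x ≫ b = a ≫ x' →
      ∃ c : C ⟶ C', toPreExtStruct.push a δ = toPreExtStruct.pull c δ' ∧ y ≫ c = b ≫ y'
  /-- (ET3)ᵒᵖ -/
  et3op : ∀ ⦃A C A' C' X X' : B⦄ (δ : toPreExtStruct.Ext C A) (δ' : toPreExtStruct.Ext C' A')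
      (x : A ⟶ X) (y : X ⟶ C) (x' : A' ⟶ X') (y' : X' ⟶ C'),
      realize δ x y → realize δ' x' y' → ∀ (b : X ⟶ X') (c : C ⟶ C'), y ≫ c = b ≫ y' →
      ∃ a : A ⟶ A', toPreExtStruct.push a δ = toPreExtStruct.pull c δ' ∧ x ≫ b = a ≫ x'
  /-- (ET4) -/
  et4 : ∀ ⦃A B₀ D C F : B⦄ (δ : toPreExtStruct.Ext D A) (f : A ⟶ B₀) (f' : B₀ ⟶ D)
      (δ' : toPreExtStruct.Ext F B₀) (g : B₀ ⟶ C) (g' : C ⟶ F),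
      realize δ f f' → realize δ' g g' →
      ∃ (E₀ : B) (d : D ⟶ E₀) (e : E₀ ⟶ F) (h' : C ⟶ E₀) (δ'' : toPreExtStruct.Ext E₀ A),
        g ≫ h' = f' ≫ d ∧ h' ≫ e = g' ∧
        realize δ'' (f ≫ g) h' ∧ realize (toPreExtStruct.push f' δ') d e ∧
        toPreExtStruct.pull d δ'' = δ ∧ toPreExtStruct.push f δ'' = toPreExtStruct.pull e δ'
  /-- (ET4)ᵒᵖ -/
  et4op : ∀ ⦃F C B₀ D A : B⦄ (δ' : toPreExtStruct.Ext B₀ F) (s : F ⟶ C) (t : C ⟶ B₀)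
      (δ : toPreExtStruct.Ext A D) (u : D ⟶ B₀) (v : B₀ ⟶ A),
      realize δ' s t → realize δ u v →
      ∃ (E₀ : B) (e : F ⟶ E₀) (d : E₀ ⟶ D) (m : E₀ ⟶ C) (δ'' : toPreExtStruct.Ext A E₀),
        m ≫ t = d ≫ u ∧ e ≫ m = s ∧
        realize δ'' m (t ≫ v) ∧ realize (toPreExtStruct.pull u δ') e d ∧
        toPreExtStruct.push d δ'' = δ ∧
        toPreExtStruct.pull v δ'' = toPreExtStruct.push e δ'

namespace ExtStruct

variable {B : Type u} [Category.{v} B] [Preadditive B] [HasFiniteBiproducts B] (σ : ExtStruct B)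

/-- A sequence `A --x--> X --y--> C` is a conflation if it realizes some `E`-extension. -/
def Conflation {A X C : B} (x : A ⟶ X) (y : X ⟶ C) : Prop :=
  ∃ δ : σ.Ext C A, σ.realize δ x y

/-- `Cone(D₁, D₂)`: objects `X` admitting a conflation `D₁ ↣ D₂ ↠ X`. -/
def Cone (D₁ D₂ : Set B) : Set B :=
  {X | ∃ (A Y : B) (f : A ⟶ Y) (g : Y ⟶ X), A ∈ D₁ ∧ Y ∈ D₂ ∧ σ.Conflation f g}

/-- `CoCone(D₁, D₂)`: objects `X` admitting a conflation `X ↣ D₁ ↠ D₂`. -/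
def CoCone (D₁ D₂ : Set B) : Set B :=
  {X | ∃ (Y C : B) (f : X ⟶ Y) (g : Y ⟶ C), Y ∈ D₁ ∧ C ∈ D₂ ∧ σ.Conflation f g}

/-- `D₁ ∗ D₂`: objects `X` admitting a conflation `D₁ ↣ X ↠ D₂`. -/
def star (D₁ D₂ : Set B) : Set B :=
  {X | ∃ (A C : B) (f : A ⟶ X) (g : X ⟶ C), A ∈ D₁ ∧ C ∈ D₂ ∧ σ.Conflation f g}

/-- `add(D₁ ∗ D₂)`: direct summands of objects of `D₁ ∗ D₂`. -/
def addStar (D₁ D₂ : Set B) : Set B :=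
  {X | ∃ Y ∈ σ.star D₁ D₂, ∃ (s : X ⟶ Y) (r : Y ⟶ X), s ≫ r = 𝟙 X}

/-- An object `P` is projective if `E(P, −) = 0`. -/
def IsProj (P : B) : Prop := ∀ (A : B) (δ : σ.Ext P A), δ = 0

/-- An object `I` is injective if `E(−, I) = 0`. -/
def IsInj (I : B) : Prop := ∀ (C : B) (δ : σ.Ext C I), δ = 0

/-- The class of projective objects. -/
def projs : Set B := {P | σ.IsProj P}

/-- `B` has enough projectives: every object admits a deflation from a projective. -/
def EnoughProj : Prop :=
  ∀ X : B, ∃ (P K : B) (i : K ⟶ P) (p : P ⟶ X), σ.IsProj P ∧ σ.Conflation i p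

/-- `B` has enough injectives: every object admits an inflation into an injective. -/
def EnoughInj : Prop :=
  ∀ X : B, ∃ (I C : B) (i : X ⟶ I) (p : I ⟶ C), σ.IsInj I ∧ σ.Conflation i p

end ExtStruct

/-- A full additive subcategory (given as a class of objects), closed under isomorphisms and
direct summands. -/
structure AddClosed {B : Type u} [Category.{v} B] [Preadditive B] [HasFiniteBiproducts B]
    (U : Set B) : Prop where
  zero_mem : ∀ Z : B, IsZero Z → Z ∈ U
  biprod_mem : ∀ X Y : B, X ∈ U → Y ∈ U → (X ⊞ Y) ∈ U
  summand_mem : ∀ X Y : B, Y ∈ U → ∀ (s : X ⟶ Y) (r : Y ⟶ X), s ≫ r = 𝟙 X → X ∈ U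

namespace ExtStruct

variable {B : Type u} [Category.{v} B] [Preadditive B] [HasFiniteBiproducts B] (σ : ExtStruct B)

/-- A (complete) cotorsion pair `(U, V)` on an extriangulated category. -/
structure IsCotorsionPair (U V : Set B) : Prop where
  addU : AddClosed U
  addV : AddClosed V
  ext_vanish : ∀ ⦃X : B⦄, X ∈ U → ∀ ⦃Y : B⦄, Y ∈ V → ∀ δ : σ.Ext X Y, δ = 0
  resolve : ∀ X : B, ∃ (V₀ U₀ : B) (f : V₀ ⟶ U₀) (g : U₀ ⟶ X),
      V₀ ∈ V ∧ U₀ ∈ U ∧ σ.Conflation f g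
  coresolve : ∀ X : B, ∃ (V₀ U₀ : B) (f : X ⟶ V₀) (g : V₀ ⟶ U₀),
      V₀ ∈ V ∧ U₀ ∈ U ∧ σ.Conflation f g

/-- A twin cotorsion pair `((S,T), (U,V))`. -/
structure IsTwinCotorsionPair (S T U V : Set B) : Prop where
  fst : σ.IsCotorsionPair S T
  snd : σ.IsCotorsionPair U V
  ext_SV : ∀ ⦃X : B⦄, X ∈ S → ∀ ⦃Y : B⦄, Y ∈ V → ∀ δ : σ.Ext X Y, δ = 0

section Twin

variable (S T U V : Set B)

/-- `B⁺ = Cone(V, W)` for the core `W = T ∩ U` of a twin cotorsion pair. -/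
def tPos : Set B := σ.Cone V (T ∩ U)

/-- `B⁻ = CoCone(W, S)` for the core `W = T ∩ U` of a twin cotorsion pair. -/
def tNeg : Set B := σ.CoCone (T ∩ U) S

/-- The class of objects of the heart `H = B⁺ ∩ B⁻` of a twin cotorsion pair. -/
def tHeartSet : Set B := σ.tPos T U V ∩ σ.tNeg S T U

/-- The heart `H/W` of a twin cotorsion pair, as a full subcategory of the quotient
category `B/W`. -/
abbrev THeart := ObjectProperty.FullSubcategory (fun X : QuotCat (T ∩ U : Set B) => X.as ∈ σ.tHeartSet S T U V)


/-- A *reflection sequence* for `B₀`: a conflation `B₀ ↣ Z ↠ S₀` with `Z ∈ B⁺`, `S₀ ∈ S`,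
such that `z^* : E(Z, V₀) → E(B₀, V₀)` is surjective for every `V₀ ∈ V`. -/
def IsReflectionSeq {B₀ Z S₀ : B} (z : B₀ ⟶ Z) (w : Z ⟶ S₀) : Prop :=
  Z ∈ σ.tPos T U V ∧ S₀ ∈ S ∧ σ.Conflation z w ∧
    ∀ ⦃V₀ : B⦄, V₀ ∈ V → Function.Surjective (fun δ : σ.Ext Z V₀ => σ.pull z δ)

/-- A *coreflection sequence* for `B₀`: a conflation `V₀ ↣ X ↠ B₀` with `X ∈ B⁻`, `V₀ ∈ V`,
such that `x_* : E(S₀, X) → E(S₀, B₀)` is surjective for every `S₀ ∈ S`. -/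
def IsCoreflectionSeq {V₀ X B₀ : B} (v : V₀ ⟶ X) (x : X ⟶ B₀) : Prop :=
  X ∈ σ.tNeg S T U ∧ V₀ ∈ V ∧ σ.Conflation v x ∧
    ∀ ⦃S₀ : B⦄, S₀ ∈ S → Function.Surjective (fun δ : σ.Ext S₀ X => σ.push x δ)

end Twin

section Single

variable (U V : Set B)

/-- `B⁺` for a single cotorsion pair `(U,V)`, with core `W = U ∩ V`. -/
def sPos : Set B := σ.Cone V (U ∩ V)

/-- `B⁻` for a single cotorsion pair `(U,V)`, with core `W = U ∩ V`. -/
def sNeg : Set B := σ.CoCone (U ∩ V) U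

/-- The class of objects of the heart of a single cotorsion pair. -/
def sHeartSet : Set B := σ.sPos U V ∩ σ.sNeg U V

/-- The heart `H/W` of a cotorsion pair `(U,V)`, a full subcategory of `B/W`, `W = U ∩ V`. -/
abbrev SHeart := ObjectProperty.FullSubcategory (fun X : QuotCat (U ∩ V : Set B) => X.as ∈ σ.sHeartSet U V)

/-- The inclusion of the heart into the quotient category `B/W`. -/
abbrev sHeartIncl : σ.SHeart U V ⥤ QuotCat (U ∩ V : Set B) := ObjectProperty.ι _

/-- The kernel `K = add(U ∗ V)` of a cotorsion pair. -/
def kernelSet : Set B := σ.addStar U V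

/-- The coheart `C = ⊥₁K` of a cotorsion pair. -/
def coheart : Set B := {X | ∀ ⦃K : B⦄, K ∈ σ.kernelSet U V → ∀ δ : σ.Ext X K, δ = 0}


/-- An object of the heart determined by an object of `B` lying in `B⁺ ∩ B⁻`. -/
def sHeartObj {X : B} (hX : X ∈ σ.sHeartSet U V) : σ.SHeart U V :=
  ⟨(toQuot (U ∩ V : Set B)).obj X, hX⟩

/-- The image in the heart of a morphism of `B` between objects of `B⁺ ∩ B⁻`. -/
def sHeartHom {X Y : B} (hX : X ∈ σ.sHeartSet U V) (hY : Y ∈ σ.sHeartSet U V) (f : X ⟶ Y) :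
    σ.sHeartObj U V hX ⟶ σ.sHeartObj U V hY :=
  ⟨(toQuot (U ∩ V : Set B)).map f⟩

end Single

end ExtStruct

end ExtCat

section More

variable {B : Type u} [Category.{v} B] [Preadditive B] [HasFiniteBiproducts B]

namespace ExtStruct

variable (σ : ExtStruct B)

/-- `Ω D₀ = CoCone(P, D₀)`, the syzygy class of a class of objects `D₀`. -/
def omegaSet (D₀ : Set B) : Set B := σ.CoCone σ.projs D₀

/-- A choice of iterated syzygies of `X`: `Z 0 = X` and for each `i` there is a conflation
`Z (i+1) ↣ P ↠ Z i` with `P` projective. -/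
def SyzygyChain (X : B) (Z : ℕ → B) : Prop :=
  Z 0 = X ∧ ∀ i : ℕ, ∃ (P : B) (f : Z (i + 1) ⟶ P) (g : P ⟶ Z i),
    σ.IsProj P ∧ σ.Conflation f g

/-- A choice of iterated cosyzygies of `Y`: `Z 0 = Y` and for each `i` there is a conflation
`Z i ↣ I ↠ Z (i+1)` with `I` injective. -/
def CosyzygyChain (Y : B) (Z : ℕ → B) : Prop :=
  Z 0 = Y ∧ ∀ i : ℕ, ∃ (I : B) (f : Z i ⟶ I) (g : I ⟶ Z (i + 1)),
    σ.IsInj I ∧ σ.Conflation f g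

/-- Vanishing of the higher extension group `E^{i+1}(X, Y) = E(X, Σ^i Y)`, expressed via
cosyzygy chains.  (`hExtVanish σ X Y 0` is the vanishing of `E(X,Y)` itself.) -/
def hExtVanish (X Y : B) (i : ℕ) : Prop :=
  ∀ Z : ℕ → B, σ.CosyzygyChain Y Z → ∀ δ : σ.Ext X (Z i), δ = 0

/-- `Σ^j D₀`: the class of `j`-th cosyzygies of objects of `D₀`. -/
def sigmaSet (j : ℕ) (D₀ : Set B) : Set B :=
  {X | ∃ Y ∈ D₀, ∃ Z : ℕ → B, σ.CosyzygyChain Y Z ∧ Z j = X}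

/-- An `n`-cluster tilting subcategory of an extriangulated category:
it is functorially finite, and `X ∈ M` iff `E^i(X, M) = 0` for `1 ≤ i ≤ n - 1`,
iff `E^i(M, X) = 0` for `1 ≤ i ≤ n - 1`. -/
structure IsNClusterTilting (n : ℕ) (M : Set B) : Prop where
  contravariantly_finite : ∀ X : B, ∃ M₀ ∈ M, ∃ f : M₀ ⟶ X,
      ∀ M₁ ∈ M, ∀ g : M₁ ⟶ X, ∃ h : M₁ ⟶ M₀, h ≫ f = g
  covariantly_finite : ∀ X : B, ∃ M₀ ∈ M, ∃ f : X ⟶ M₀,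
      ∀ M₁ ∈ M, ∀ g : X ⟶ M₁, ∃ h : M₀ ⟶ M₁, f ≫ h = g
  mem_iff_vanish_left : ∀ X : B,
      X ∈ M ↔ ∀ i : ℕ, i ≤ n - 2 → ∀ Y ∈ M, σ.hExtVanish X Y i
  mem_iff_vanish_right : ∀ X : B,
      X ∈ M ↔ ∀ i : ℕ, i ≤ n - 2 → ∀ Y ∈ M, σ.hExtVanish Y X i

/-- `mlev σ M k` is the subcategory `M_{k+1}` of the paper: `M_1 = M` and
`M_{ℓ} = Cone(M_{ℓ-1}, M)`. -/
def mlev (M : Set B) : ℕ → Set B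
  | 0 => M
  | (k + 1) => σ.Cone (mlev M k) M

end ExtStruct

section Reflectors

variable (W P N : Set B)

/-- The data of a reflection functor `σ⁺` onto the objects of `B⁺` (given by the class `P`),
i.e. a left adjoint of the inclusion of the full subcategory of `B/W` on `P` in the bijection
formulation: composing with the unit `B → σ⁺B` gives bijections
`(σ⁺X ⟶ Y) ≃ (X ⟶ Y)` for all `Y` lying in `P`. -/
structure ReflectorData where
  σp : QuotCat W ⥤ QuotCat W
  mem : ∀ X : QuotCat W, (σp.obj X).as ∈ P
  unit : 𝟭 (QuotCat W) ⟶ σp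
  bij : ∀ (X Y : QuotCat W), Y.as ∈ P →
      Function.Bijective (fun g : (σp.obj X ⟶ Y) => unit.app X ≫ g)

/-- The data of a coreflection functor `σ⁻` onto the objects of `B⁻` (given by the class `N`). -/
structure CoreflectorData where
  σm : QuotCat W ⥤ QuotCat W
  mem : ∀ X : QuotCat W, (σm.obj X).as ∈ N
  counit : σm ⟶ 𝟭 (QuotCat W)
  bij : ∀ (X Y : QuotCat W), X.as ∈ N →
      Function.Bijective (fun g : (X ⟶ σm.obj Y) => g ≫ counit.app Y)

end Reflectors

namespace ExtStruct

variable (σ : ExtStruct B)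

/-- The data of the cohomological functor `H = σ⁻ ∘ σ⁺ ∘ π : B → H` associated to a cotorsion
pair `(U, V)`: reflection and coreflection functors together with a functor `H` to the heart
which is isomorphic to `σ⁻ ∘ σ⁺ ∘ π` after composition with the inclusion of the heart. -/
structure HeartFunctorData (U V : Set B) where
  refl : ReflectorData (B := B) (U ∩ V) (σ.sPos U V)
  corefl : CoreflectorData (B := B) (U ∩ V) (σ.sNeg U V)
  H : B ⥤ σ.SHeart U V
  iso : (H ⋙ σ.sHeartIncl U V) ≅ (toQuot (U ∩ V : Set B) ⋙ refl.σp ⋙ corefl.σm)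

end ExtStruct

section Mod

variable (D : Type u₂) [Category.{v₂} D] [Preadditive D]

/-- A coherent (finitely presented) functor `Dᵒᵖ ⥤ Ab`: one admitting an exact presentation
`Hom(−,X) → Hom(−,Y) → F → 0`. -/
def IsCoherent (F : Dᵒᵖ ⥤ AddCommGrpCat.{v₂}) : Prop :=
  ∃ (X Y : D) (f : X ⟶ Y) (η : preadditiveYoneda.obj Y ⟶ F),
    (∀ A : D, Function.Surjective (η.app (op A))) ∧
    (∀ (A : D) (g : A ⟶ Y), η.app (op A) g = 0 ↔ ∃ h : A ⟶ X, h ≫ f = g)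

/-- `mod D`: the category of coherent functors `Dᵒᵖ ⥤ Ab`. -/
abbrev ModCat := ObjectProperty.FullSubcategory (fun F : Dᵒᵖ ⥤ AddCommGrpCat.{v₂} => IsCoherent D F)

end Mod

/-- The additive quotient `C/P` of the full subcategory of `B` on a class `C₀` of objects by
(the ideal of) morphisms factoring through objects satisfying `P₀`. -/
abbrev StableCat (C₀ P₀ : Set B) :=
  QuotCat (D := ObjectProperty.FullSubcategory (fun X : B => X ∈ C₀)) {Z | Z.obj ∈ P₀}

end More

section Devel

open ZeroObject

namespace ExtStruct

variable {B : Type u} [Category.{v} B] [Preadditive B] [HasFiniteBiproducts B] (σ : ExtStruct B)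

/-! ### push/pull calculus -/

lemma push_push {C A A' A'' : B} (f : A ⟶ A') (g : A' ⟶ A'') (δ : σ.Ext C A) :
    σ.push g (σ.push f δ) = σ.push (f ≫ g) δ := by
  show ((σ.E.obj (op C)).map g) (((σ.E.obj (op C)).map f) δ)
      = ((σ.E.obj (op C)).map (f ≫ g)) δ
  rw [Functor.map_comp]; rfl

lemma pull_pull {C'' C' C A : B} (f : C'' ⟶ C') (g : C' ⟶ C) (δ : σ.Ext C A) :
    σ.pull f (σ.pull g δ) = σ.pull (f ≫ g) δ := by
  show (σ.E.map f.op).app A ((σ.E.map g.op).app A δ) = (σ.E.map (f ≫ g).op).app A δ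
  rw [op_comp, Functor.map_comp]; rfl

@[simp] lemma push_id {C A : B} (δ : σ.Ext C A) : σ.push (𝟙 A) δ = δ := by
  show ((σ.E.obj (op C)).map (𝟙 A)) δ = δ
  rw [CategoryTheory.Functor.map_id]; rfl

@[simp] lemma pull_id {C A : B} (δ : σ.Ext C A) : σ.pull (𝟙 C) δ = δ := by
  show (σ.E.map (𝟙 C).op).app A δ = δ
  rw [op_id, CategoryTheory.Functor.map_id]; rfl

lemma push_pull {C' C A A' : B} (a : A ⟶ A') (c : C' ⟶ C) (δ : σ.Ext C A) :
    σ.push a (σ.pull c δ) = σ.pull c (σ.push a δ) := by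
  have h := NatTrans.naturality (σ.E.map c.op) a
  have h' := congrArg
    (fun (k : (σ.E.obj (op C)).obj A ⟶ (σ.E.obj (op C')).obj A') => k δ) h
  simp only [CategoryTheory.comp_apply] at h'
  exact h'.symm

@[simp] lemma push_zero_mor {C A A' : B} (δ : σ.Ext C A) :
    σ.push (0 : A ⟶ A') δ = 0 := by
  letI := σ.additive_fst (op C)
  show ((σ.E.obj (op C)).map (0 : A ⟶ A')) δ = 0
  rw [Functor.map_zero]; rfl

@[simp] lemma pull_zero_mor {C' C A : B} (δ : σ.Ext C A) :
    σ.pull (0 : C' ⟶ C) δ = 0 := by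
  letI := σ.additive_snd A
  show (σ.E.map (0 : C' ⟶ C).op).app A δ = 0
  have h2 : (σ.E.map (0 : C' ⟶ C).op).app A
      = (σ.E.flip.obj A).map ((0 : C' ⟶ C).op) := rfl
  have h0 : ((0 : C' ⟶ C).op) = (0 : op C ⟶ op C') := rfl
  rw [h2, h0, Functor.map_zero]; rfl

@[simp] lemma push_zero {C A A' : B} (f : A ⟶ A') :
    σ.push f (0 : σ.Ext C A) = 0 :=
  ((σ.E.obj (op C)).map f).hom.map_zero

@[simp] lemma pull_zero {C' C A : B} (c : C' ⟶ C) :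
    σ.pull c (0 : σ.Ext C A) = 0 :=
  ((σ.E.map c.op).app A).hom.map_zero

lemma push_add {C A A' : B} (f : A ⟶ A') (δ δ' : σ.Ext C A) :
    σ.push f (δ + δ') = σ.push f δ + σ.push f δ' :=
  ((σ.E.obj (op C)).map f).hom.map_add δ δ'

lemma push_neg {C A A' : B} (f : A ⟶ A') (δ : σ.Ext C A) :
    σ.push f (-δ) = -σ.push f δ :=
  ((σ.E.obj (op C)).map f).hom.map_neg δ

lemma push_sub {C A A' : B} (f : A ⟶ A') (δ δ' : σ.Ext C A) :
    σ.push f (δ - δ') = σ.push f δ - σ.push f δ' :=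
  ((σ.E.obj (op C)).map f).hom.map_sub δ δ'

lemma pull_add {C' C A : B} (c : C' ⟶ C) (δ δ' : σ.Ext C A) :
    σ.pull c (δ + δ') = σ.pull c δ + σ.pull c δ' :=
  ((σ.E.map c.op).app A).hom.map_add δ δ'

lemma pull_sub {C' C A : B} (c : C' ⟶ C) (δ δ' : σ.Ext C A) :
    σ.pull c (δ - δ') = σ.pull c δ - σ.pull c δ' :=
  ((σ.E.map c.op).app A).hom.map_sub δ δ'

lemma push_neg_mor {C A A' : B} (f : A ⟶ A') (δ : σ.Ext C A) :
    σ.push (-f) δ = -σ.push f δ := by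
  letI := σ.additive_fst (op C)
  show ((σ.E.obj (op C)).map (-f)) δ = -((σ.E.obj (op C)).map f) δ
  rw [Functor.map_neg]; rfl

lemma push_add_mor {C A A' : B} (f g : A ⟶ A') (δ : σ.Ext C A) :
    σ.push (f + g) δ = σ.push f δ + σ.push g δ := by
  letI := σ.additive_fst (op C)
  show ((σ.E.obj (op C)).map (f + g)) δ = _
  rw [Functor.map_add]; rfl

lemma pull_sub_mor {C' C A : B} (f g : C' ⟶ C) (δ : σ.Ext C A) :
    σ.pull (f - g) δ = σ.pull f δ - σ.pull g δ := by
  letI := σ.additive_snd A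
  show (σ.E.map (f - g).op).app A δ = _
  have h2 : ∀ (k : C' ⟶ C), (σ.E.map k.op).app A = (σ.E.flip.obj A).map (k.op) := fun _ => rfl
  have h0 : ((f - g).op) = (f.op - g.op : op C ⟶ op C') := rfl
  rw [h2, h0, Functor.map_sub]; rfl

end ExtStruct

end Devel
section Devel2

open ZeroObject

namespace ExtStruct

variable {B : Type u} [Category.{v} B] [Preadditive B] [HasFiniteBiproducts B] (σ : ExtStruct B)

/-! ### trivial conflations -/

lemma realize_from_zero (Y : B) (f : (0 : B) ⟶ Y) :
    σ.realize (0 : σ.Ext Y (0 : B)) f (𝟙 Y) := by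
  have h := σ.realize_zero (0 : B) Y
  have hsi : (biprod.snd : (0 : B) ⊞ Y ⟶ Y) ≫ biprod.inr = 𝟙 _ := by
    apply biprod.hom_ext'
    · exact (Limits.isZero_zero B).eq_of_src _ _
    · simp
  have h2 := σ.realize_iso _ _ _ ⟨biprod.snd, biprod.inr, hsi, by simp⟩ h
  simp only [Iso.refl_hom] at h2
  have e1 : (biprod.inl : (0 : B) ⟶ (0 : B) ⊞ Y) ≫ biprod.snd = f :=
    (Limits.isZero_zero B).eq_of_src _ _
  have e2 : (biprod.inr : Y ⟶ (0 : B) ⊞ Y) ≫ biprod.snd = 𝟙 Y := by simp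
  rw [e1, e2] at h2
  exact h2

lemma realize_to_zero (Y : B) (g : Y ⟶ (0 : B)) :
    σ.realize (0 : σ.Ext (0 : B) Y) (𝟙 Y) g := by
  have h := σ.realize_zero Y (0 : B)
  have hsi : (biprod.fst : Y ⊞ (0 : B) ⟶ Y) ≫ biprod.inl = 𝟙 _ := by
    apply biprod.hom_ext'
    · simp
    · exact (Limits.isZero_zero B).eq_of_src _ _
  have h2 := σ.realize_iso _ _ _ ⟨biprod.fst, biprod.inl, hsi, by simp⟩ h
  simp only [Iso.refl_hom] at h2
  have e1 : (biprod.inl : Y ⟶ Y ⊞ (0 : B)) ≫ biprod.fst = 𝟙 Y := by simp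
  have e2 : (biprod.inl : Y ⟶ Y ⊞ (0 : B)) ≫ biprod.snd = g :=
    (Limits.isZero_zero B).eq_of_tgt _ _
  rw [e1, e2] at h2
  exact h2

/-! ### basic consequences of the axioms -/

lemma comp_eq_zero {A X C : B} {δ : σ.Ext C A} {x : A ⟶ X} {y : X ⟶ C}
    (h : σ.realize δ x y) : x ≫ y = 0 := by
  obtain ⟨a, _, ha2⟩ := σ.et3op _ _ _ _ _ _ h (σ.realize_zero A C)
    (biprod.lift 0 y) (𝟙 C) (by simp)
  have := congrArg (fun k => k ≫ biprod.snd) ha2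
  simpa using this

lemma push_infl {A X C : B} {δ : σ.Ext C A} {x : A ⟶ X} {y : X ⟶ C}
    (h : σ.realize δ x y) : σ.push x δ = 0 := by
  obtain ⟨c, hc1, _⟩ := σ.et3 _ _ _ _ _ _ h (σ.realize_zero X C) x biprod.inl rfl
  rw [hc1, pull_zero]

lemma pull_defl {A X C : B} {δ : σ.Ext C A} {x : A ⟶ X} {y : X ⟶ C}
    (h : σ.realize δ x y) : σ.pull y δ = 0 := by
  obtain ⟨a, ha1, _⟩ := σ.et3op _ _ _ _ _ _ (σ.realize_zero A X) h
    biprod.snd y rfl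
  rw [← ha1, push_zero]

lemma exists_ext_of_push_eq_zero {A X C Y : B} {δ : σ.Ext C A} {x : A ⟶ X} {y : X ⟶ C}
    (h : σ.realize δ x y) (f : A ⟶ Y) (hf : σ.push f δ = 0) :
    ∃ g : X ⟶ Y, x ≫ g = f := by
  obtain ⟨b, hb1, _⟩ := σ.realize_map _ _ _ _ _ _ f (𝟙 C) h (σ.realize_zero Y C)
    (by rw [hf, pull_zero])
  refine ⟨b ≫ biprod.fst, ?_⟩
  rw [← Category.assoc, hb1]; simp

lemma exists_lift_of_pull_eq_zero {A X C Y : B} {δ : σ.Ext C A} {x : A ⟶ X} {y : X ⟶ C}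
    (h : σ.realize δ x y) (c : Y ⟶ C) (hc : σ.pull c δ = 0) :
    ∃ g : Y ⟶ X, g ≫ y = c := by
  obtain ⟨b, hb1, hb2⟩ := σ.realize_map _ _ _ _ _ _ (𝟙 A) c (σ.realize_zero A Y) h
    (by rw [push_zero, hc])
  refine ⟨biprod.inr ≫ b, ?_⟩
  rw [Category.assoc, ← hb2]; simp

lemma weak_coker {A X C Y : B} {δ : σ.Ext C A} {x : A ⟶ X} {y : X ⟶ C}
    (h : σ.realize δ x y) (g : X ⟶ Y) (hg : x ≫ g = 0) :
    ∃ t : C ⟶ Y, y ≫ t = g := by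
  obtain ⟨c, _, hc2⟩ := σ.et3 _ _ _ _ _ _ h (σ.realize_from_zero Y 0)
    (0 : A ⟶ (0 : B)) g (by rw [hg, zero_comp])
  exact ⟨c, by simpa using hc2⟩

lemma weak_ker {A X C Y : B} {δ : σ.Ext C A} {x : A ⟶ X} {y : X ⟶ C}
    (h : σ.realize δ x y) (g : Y ⟶ X) (hg : g ≫ y = 0) :
    ∃ a : Y ⟶ A, a ≫ x = g := by
  obtain ⟨a, _, ha2⟩ := σ.et3op _ _ _ _ _ _ (σ.realize_to_zero Y 0) h
    g (0 : (0 : B) ⟶ C) (by rw [hg, zero_comp])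
  exact ⟨a, by simpa using ha2.symm⟩

/-! ### split conflations -/

lemma split_iso_of_realize_zero {A X C : B} {x : A ⟶ X} {y : X ⟶ C}
    (h : σ.realize (0 : σ.Ext C A) x y) :
    ∃ b : X ≅ A ⊞ C, x ≫ b.hom = biprod.inl ∧ b.hom ≫ biprod.snd = y :=
  σ.realize_unique _ _ _ _ _ h (σ.realize_zero A C)

lemma retraction_of_realize_zero {A X C : B} {x : A ⟶ X} {y : X ⟶ C}
    (h : σ.realize (0 : σ.Ext C A) x y) :
    ∃ r : X ⟶ A, x ≫ r = 𝟙 A := by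
  obtain ⟨b, hb1, _⟩ := σ.split_iso_of_realize_zero h
  exact ⟨b.hom ≫ biprod.fst, by rw [← Category.assoc, hb1]; simp⟩

lemma section_of_realize_zero {A X C : B} {x : A ⟶ X} {y : X ⟶ C}
    (h : σ.realize (0 : σ.Ext C A) x y) :
    ∃ s : C ⟶ X, s ≫ y = 𝟙 C := by
  obtain ⟨b, _, hb2⟩ := σ.split_iso_of_realize_zero h
  refine ⟨biprod.inr ≫ b.inv, ?_⟩
  rw [Category.assoc, ← hb2, ← Category.assoc]
  simp

/-! ### boundary-exactness -/

lemma exists_push_of_pull_defl_zero {A X C Y' : B} {δ : σ.Ext C A} {x : A ⟶ X} {y : X ⟶ C}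
    (h : σ.realize δ x y) (θ : σ.Ext C Y') (hθ : σ.pull y θ = 0) :
    ∃ lam : A ⟶ Y', σ.push lam δ = θ := by
  obtain ⟨Xθ, mθ, nθ, hre⟩ := σ.realize_ex θ
  obtain ⟨g, hg⟩ := σ.exists_lift_of_pull_eq_zero hre y hθ
  obtain ⟨a, ha1, _⟩ := σ.et3op _ _ _ _ _ _ h hre g (𝟙 C)
    (by rw [Category.comp_id, hg])
  exact ⟨a, by simpa using ha1⟩

lemma exists_pull_of_push_infl_zero {A X C Q : B} {δ : σ.Ext C A} {x : A ⟶ X} {y : X ⟶ C}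
    (h : σ.realize δ x y) (χ : σ.Ext Q A) (hχ : σ.push x χ = 0) :
    ∃ u : Q ⟶ C, σ.pull u δ = χ := by
  obtain ⟨Mχ, mχ, nχ, hre⟩ := σ.realize_ex χ
  obtain ⟨g, hg⟩ := σ.exists_ext_of_push_eq_zero hre x hχ
  obtain ⟨u, hu1, _⟩ := σ.et3 _ _ _ _ _ _ hre h (𝟙 A) g (by rw [hg, Category.id_comp])
  exact ⟨u, by simpa using hu1.symm⟩

end ExtStruct

end Devel2
section Devel3

open ZeroObject

namespace ExtStruct

variable {B : Type u} [Category.{v} B] [Preadditive B] [HasFiniteBiproducts B] (σ : ExtStruct B)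

/-! ### mid-E exactness -/

lemma exists_pull_defl_of_pull_infl_zero {A X C Y' : B} {δ : σ.Ext C A} {x : A ⟶ X}
    {y : X ⟶ C} (h : σ.realize δ x y) (ρ : σ.Ext X Y') (hρ : σ.pull x ρ = 0) :
    ∃ τ : σ.Ext C Y', σ.pull y τ = ρ := by
  obtain ⟨Mρ, m, n, hre⟩ := σ.realize_ex ρ
  obtain ⟨E₀, e, d, m₀, δ'', _, _, _, hVA, _, rel6⟩ := σ.et4op ρ m n δ x y hre h
  rw [hρ] at hVA
  obtain ⟨r, hr⟩ := σ.retraction_of_realize_zero hVA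
  refine ⟨σ.push r δ'', ?_⟩
  rw [← push_pull, rel6, push_push, hr, push_id]

lemma exists_push_infl_of_push_defl_zero {A X C Q : B} {δ : σ.Ext C A} {x : A ⟶ X}
    {y : X ⟶ C} (h : σ.realize δ x y) (χ : σ.Ext Q X) (hχ : σ.push y χ = 0) :
    ∃ τ : σ.Ext Q A, σ.push x τ = χ := by
  obtain ⟨Mχ, m, n, hre⟩ := σ.realize_ex χ
  obtain ⟨E₀, d, e, h', δ'', _, _, _, hCE, _, rel6⟩ := σ.et4 δ x y χ m n h hre
  rw [hχ] at hCE
  obtain ⟨s, hs⟩ := σ.section_of_realize_zero hCE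
  refine ⟨σ.pull s δ'', ?_⟩
  rw [push_pull, rel6, pull_pull, hs, pull_id]

/-! ### endomorphism/iso lemmas -/

lemma isIso_endo {A X C : B} {δ : σ.Ext C A} {x : A ⟶ X} {y : X ⟶ C}
    (h : σ.realize δ x y) (ψ : X ⟶ X) (h1 : x ≫ ψ = x) (h2 : ψ ≫ y = y) : IsIso ψ := by
  have hker : (𝟙 X - ψ) ≫ y = 0 := by
    rw [Preadditive.sub_comp, h2, Category.id_comp, sub_self]
  obtain ⟨hh, hhx⟩ := σ.weak_ker h (𝟙 X - ψ) hker
  have hxn : x ≫ (hh ≫ x) = 0 := by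
    rw [hhx, Preadditive.comp_sub, h1, Category.comp_id, sub_self]
  have hnn : (hh ≫ x) ≫ (hh ≫ x) = 0 := by
    rw [Category.assoc, hxn, comp_zero]
  have hψ : ψ = 𝟙 X - hh ≫ x := by rw [hhx]; abel
  refine ⟨𝟙 X + hh ≫ x, ?_, ?_⟩ <;>
  · rw [hψ]
    simp only [Preadditive.sub_comp, Preadditive.comp_sub, Preadditive.add_comp,
      Preadditive.comp_add, Category.id_comp, Category.comp_id, hnn]
    abel

omit [Preadditive B] [HasFiniteBiproducts B] in
lemma isIso_of_comp_comp {P Q : B} (f : P ⟶ Q) (g : Q ⟶ P)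
    (h1 : IsIso (f ≫ g)) (h2 : IsIso (g ≫ f)) : IsIso g := by
  refine ⟨f ≫ inv (g ≫ f), ?_, ?_⟩
  · rw [← Category.assoc, IsIso.hom_inv_id]
  · have : (f ≫ g) ≫ (f ≫ inv (g ≫ f)) ≫ g = (f ≫ g) ≫ 𝟙 P := by
      rw [Category.comp_id]
      slice_lhs 2 4 => rw [← Category.assoc, IsIso.hom_inv_id]
      simp
    exact (cancel_epi (f ≫ g)).mp this

/-! ### transport of realizations along end isomorphisms -/

lemma realize_iso_left {A' A X C : B} (a : A' ≅ A) {δ : σ.Ext C A} {x : A ⟶ X} {y : X ⟶ C}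
    (h : σ.realize δ x y) : σ.realize (σ.push a.inv δ) (a.hom ≫ x) y := by
  obtain ⟨X₀, x₀, y₀, h₀⟩ := σ.realize_ex (σ.push a.inv δ)
  obtain ⟨b, hb1, hb2⟩ := σ.realize_map _ _ _ _ _ _ a.inv (𝟙 C) h h₀ (by rw [pull_id])
  obtain ⟨b', hb'1, hb'2⟩ := σ.realize_map _ _ _ _ _ _ a.hom (𝟙 C) h₀ h
    (by rw [push_push, Iso.inv_hom_id, push_id, pull_id])
  rw [Category.comp_id] at hb2 hb'2
  have i1 : IsIso (b' ≫ b) := by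
    refine σ.isIso_endo h₀ _ ?_ ?_
    · rw [← Category.assoc, hb'1, Category.assoc, hb1, ← Category.assoc,
        Iso.hom_inv_id, Category.id_comp]
    · rw [Category.assoc, ← hb2, ← hb'2]
  have i2 : IsIso (b ≫ b') := by
    refine σ.isIso_endo h _ ?_ ?_
    · rw [← Category.assoc, hb1, Category.assoc, hb'1, ← Category.assoc,
        Iso.inv_hom_id, Category.id_comp]
    · rw [Category.assoc, ← hb'2, ← hb2]
  have : IsIso b' := isIso_of_comp_comp b b' i2 i1
  have h₂ := σ.realize_iso _ _ _ (asIso b') h₀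
  rw [asIso_hom, hb'1] at h₂
  have e : (asIso b').inv ≫ y₀ = y := by
    rw [asIso_inv, IsIso.inv_comp_eq, hb'2]
  rwa [e] at h₂

lemma realize_iso_right {A X C' C : B} (c : C' ≅ C) {δ : σ.Ext C A} {x : A ⟶ X} {y : X ⟶ C}
    (h : σ.realize δ x y) : σ.realize (σ.pull c.hom δ) x (y ≫ c.inv) := by
  obtain ⟨X₀, x₀, y₀, h₀⟩ := σ.realize_ex (σ.pull c.hom δ)
  obtain ⟨b, hb1, hb2⟩ := σ.realize_map _ _ _ _ _ _ (𝟙 A) c.hom h₀ h (by rw [push_id])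
  obtain ⟨b', hb'1, hb'2⟩ := σ.realize_map _ _ _ _ _ _ (𝟙 A) c.inv h h₀
    (by rw [push_id, pull_pull, Iso.inv_hom_id, pull_id])
  rw [Category.id_comp] at hb1 hb'1
  have i1 : IsIso (b ≫ b') := by
    refine σ.isIso_endo h₀ _ ?_ ?_
    · rw [← Category.assoc, hb1, hb'1]
    · rw [Category.assoc, ← hb'2, ← Category.assoc, ← hb2, Category.assoc,
        Iso.hom_inv_id, Category.comp_id]
  have i2 : IsIso (b' ≫ b) := by
    refine σ.isIso_endo h _ ?_ ?_
    · rw [← Category.assoc, hb'1, hb1]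
    · rw [Category.assoc, ← hb2, ← Category.assoc, ← hb'2, Category.assoc,
        Iso.inv_hom_id, Category.comp_id]
  have : IsIso b := isIso_of_comp_comp b' b i2 i1
  have h₂ := σ.realize_iso _ _ _ (asIso b) h₀
  rw [asIso_hom, hb1] at h₂
  have e : (asIso b).inv ≫ y₀ = y ≫ c.inv := by
    rw [asIso_inv, IsIso.inv_comp_eq, ← Category.assoc, ← hb2, Category.assoc,
      Iso.hom_inv_id, Category.comp_id]
  rwa [e] at h₂

/-! ### uniqueness of cones -/

lemma cone_unique {A X C₁ C₂ : B} {δ₁ : σ.Ext C₁ A} {δ₂ : σ.Ext C₂ A} {x : A ⟶ X}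
    {y₁ : X ⟶ C₁} {y₂ : X ⟶ C₂} (h1 : σ.realize δ₁ x y₁) (h2 : σ.realize δ₂ x y₂) :
    ∃ c : C₁ ≅ C₂, y₁ ≫ c.hom = y₂ ∧ σ.pull c.hom δ₂ = δ₁ := by
  obtain ⟨c, hc1, hc2⟩ := σ.et3 _ _ _ _ _ _ h1 h2 (𝟙 A) (𝟙 X) (by simp)
  rw [push_id] at hc1
  rw [Category.id_comp] at hc2
  -- hc1 : δ₁ = pull c δ₂ ; hc2 : y₁ ≫ c = y₂
  have surj : ∀ {Q : B} (u : Q ⟶ C₂), ∃ v : Q ⟶ C₁, v ≫ c = u := by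
    intro Q u
    have hz : σ.push x (σ.pull u δ₂) = 0 := by
      rw [push_pull, σ.push_infl h2, pull_zero]
    obtain ⟨v₀, hv₀⟩ := σ.exists_pull_of_push_infl_zero h1 (σ.pull u δ₂) hz
    have : σ.pull (v₀ ≫ c - u) δ₂ = 0 := by
      rw [pull_sub_mor, ← pull_pull, ← hc1, hv₀, sub_self]
    obtain ⟨g, hg⟩ := σ.exists_lift_of_pull_eq_zero h2 _ this
    refine ⟨v₀ - g ≫ y₁, ?_⟩
    rw [Preadditive.sub_comp, Category.assoc, hc2]
    rw [hg]; abel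
  have inj : ∀ {Q : B} (u : Q ⟶ C₁), u ≫ c = 0 → u = 0 := by
    intro Q u hu
    have : σ.pull u δ₁ = 0 := by
      rw [hc1, pull_pull, hu, pull_zero_mor]
    obtain ⟨g, hg⟩ := σ.exists_lift_of_pull_eq_zero h1 u this
    have hgy : g ≫ y₂ = 0 := by rw [← hc2, ← Category.assoc, hg, hu]
    obtain ⟨a, ha⟩ := σ.weak_ker h2 g hgy
    rw [← hg, ← ha, Category.assoc, σ.comp_eq_zero h1, comp_zero]
  obtain ⟨v, hv⟩ := surj (𝟙 C₂)
  have hcv : c ≫ v = 𝟙 C₁ := by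
    have : (c ≫ v - 𝟙 C₁) ≫ c = 0 := by
      rw [Preadditive.sub_comp, Category.assoc, hv, Category.comp_id, Category.id_comp,
        sub_self]
    have := inj _ this
    rwa [sub_eq_zero] at this
  exact ⟨⟨c, v, hcv, hv⟩, hc2, hc1.symm⟩

end ExtStruct

end Devel3
section Devel4

open ZeroObject

namespace ExtStruct

variable {B : Type u} [Category.{v} B] [Preadditive B] [HasFiniteBiproducts B] (σ : ExtStruct B)

lemma realize_zero_split {A X C : B} (b : X ≅ A ⊞ C) :
    σ.realize (0 : σ.Ext C A) (biprod.inl ≫ b.inv) (b.hom ≫ biprod.snd) := by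
  have h := σ.realize_iso _ _ _ b.symm (σ.realize_zero A C)
  simpa using h

lemma sumExt_eq {C C' A A' : B} (δ : σ.Ext C A) (δ' : σ.Ext C' A') :
    σ.toPreExtStruct.sumExt δ δ' =
      σ.push biprod.inl (σ.pull biprod.fst δ) + σ.push biprod.inr (σ.pull biprod.snd δ') :=
  rfl

lemma realize_inr_fst (Bo A : B) :
    σ.realize (0 : σ.Ext Bo A) (biprod.inr : A ⟶ Bo ⊞ A) (biprod.fst) := by
  have hb : (biprod.lift biprod.snd biprod.fst : Bo ⊞ A ⟶ A ⊞ Bo) ≫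
      (biprod.lift biprod.snd biprod.fst : A ⊞ Bo ⟶ Bo ⊞ A) = 𝟙 _ := by
    apply biprod.hom_ext <;> simp
  have hb' : (biprod.lift biprod.snd biprod.fst : A ⊞ Bo ⟶ Bo ⊞ A) ≫
      (biprod.lift biprod.snd biprod.fst : Bo ⊞ A ⟶ A ⊞ Bo) = 𝟙 _ := by
    apply biprod.hom_ext <;> simp
  have h := σ.realize_zero_split (b := (⟨biprod.lift biprod.snd biprod.fst,
    biprod.lift biprod.snd biprod.fst, hb, hb'⟩ : (Bo ⊞ A) ≅ (A ⊞ Bo)))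
  have e1 : (biprod.inl : A ⟶ A ⊞ Bo) ≫ (biprod.lift biprod.snd biprod.fst) =
      (biprod.inr : A ⟶ Bo ⊞ A) := by apply biprod.hom_ext <;> simp
  have e2 : (biprod.lift biprod.snd biprod.fst : Bo ⊞ A ⟶ A ⊞ Bo) ≫ biprod.snd =
      biprod.fst := by simp
  rw [show ((⟨biprod.lift biprod.snd biprod.fst, biprod.lift biprod.snd biprod.fst, hb, hb'⟩ :
    (Bo ⊞ A) ≅ (A ⊞ Bo))).inv = biprod.lift biprod.snd biprod.fst from rfl] at h
  rw [show ((⟨biprod.lift biprod.snd biprod.fst, biprod.lift biprod.snd biprod.fst, hb, hb'⟩ :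
    (Bo ⊞ A) ≅ (A ⊞ Bo))).hom = biprod.lift biprod.snd biprod.fst from rfl] at h
  rwa [e1, e2] at h

/-- The pushout of a conflation along a morphism from its base, together with
the induced "mapping cone" conflation. -/
lemma pushout_data {A X C Bo : B} {δ : σ.Ext C A} {x : A ⟶ X} {y : X ⟶ C}
    (h : σ.realize δ x y) (f : A ⟶ Bo) :
    ∃ (P : B) (m : Bo ⟶ P) (e : P ⟶ C) (hm : X ⟶ P) (μ : σ.Ext P A),
      σ.realize (-(σ.push f δ)) m e ∧
      σ.realize μ (biprod.lift f x) (biprod.desc m hm) ∧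
      f ≫ m = -(x ≫ hm) ∧ hm ≫ e = y := by
  have hsum := σ.realize_sum _ _ _ _ _ _ (σ.realize_to_zero Bo 0) h
  have hc1 : (biprod.inr : C ⟶ (0 : B) ⊞ C) ≫ biprod.snd = 𝟙 _ := by simp
  have hc2 : (biprod.snd : (0 : B) ⊞ C ⟶ C) ≫ biprod.inr = 𝟙 _ := by
    apply biprod.hom_ext'
    · exact (Limits.isZero_zero B).eq_of_src _ _
    · simp
  have h3 := σ.realize_iso_right (⟨biprod.inr, biprod.snd, hc1, hc2⟩ : C ≅ (0 : B) ⊞ C) hsum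
  rw [show (⟨biprod.inr, biprod.snd, hc1, hc2⟩ : C ≅ (0 : B) ⊞ C).inv = biprod.snd from rfl,
    show (⟨biprod.inr, biprod.snd, hc1, hc2⟩ : C ≅ (0 : B) ⊞ C).hom = biprod.inr from rfl] at h3
  have e3 : biprod.map (0 : Bo ⟶ (0 : B)) y ≫ biprod.snd = biprod.snd ≫ y := by simp
  rw [e3] at h3
  have hδ₁ : σ.pull (biprod.inr : C ⟶ (0 : B) ⊞ C)
      (σ.toPreExtStruct.sumExt (0 : σ.Ext (0 : B) Bo) δ)
      = σ.push (biprod.inr : A ⟶ Bo ⊞ A) δ := by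
    rw [sumExt_eq, pull_zero, push_zero, zero_add, ← push_pull, pull_pull]
    simp
  rw [hδ₁] at h3
  -- h3 : realize (push inr δ) (map (𝟙 Bo) x) (snd ≫ y)
  set α : Bo ⊞ A ⟶ Bo ⊞ A := biprod.desc biprod.inl (biprod.lift f (𝟙 A)) with hα
  set α' : Bo ⊞ A ⟶ Bo ⊞ A := biprod.desc biprod.inl (biprod.lift (-f) (𝟙 A)) with hα'
  have hαα' : α ≫ α' = 𝟙 _ := by
    apply biprod.hom_ext' <;> apply biprod.hom_ext <;>
      simp [hα, hα', biprod.lift_desc]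
  have hα'α : α' ≫ α = 𝟙 _ := by
    apply biprod.hom_ext' <;> apply biprod.hom_ext <;>
      simp [hα, hα', biprod.lift_desc]
  have h4 := σ.realize_iso_left (⟨α, α', hαα', hα'α⟩ : (Bo ⊞ A) ≅ (Bo ⊞ A)) h3
  have eθ : α ≫ biprod.map (𝟙 Bo) x = biprod.desc biprod.inl (biprod.lift f x) := by
    apply biprod.hom_ext' <;> apply biprod.hom_ext <;>
      simp [hα, biprod.lift_desc]
  have eδ₂ : σ.push α' (σ.push (biprod.inr : A ⟶ Bo ⊞ A) δ)
      = σ.push (biprod.lift (-f) (𝟙 A)) δ := by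
    rw [push_push]
    congr 1
    simp [hα']
  rw [show (⟨α, α', hαα', hα'α⟩ : (Bo ⊞ A) ≅ (Bo ⊞ A)).inv = α' from rfl] at h4
  rw [show (⟨α, α', hαα', hα'α⟩ : (Bo ⊞ A) ≅ (Bo ⊞ A)).hom = α from rfl] at h4
  rw [eδ₂, eθ] at h4
  -- h4 : realize (push (lift (-f) 𝟙) δ) (desc inl (lift f x)) (snd ≫ y)
  obtain ⟨P, d, e, h', δ'', rel1, rel2, hconfA, hconfB, rel5, rel6⟩ :=
    σ.et4 _ _ _ _ _ _ (σ.realize_inr_fst Bo A) h4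
  -- rel1 : desc inl (lift f x) ≫ h' = fst ≫ d
  have hfm : σ.push biprod.fst (σ.push (biprod.lift (-f) (𝟙 A)) δ) = -(σ.push f δ) := by
    rw [push_push]
    have : (biprod.lift (-f) (𝟙 A)) ≫ biprod.fst = -f := by simp
    rw [this, push_neg_mor]
  rw [hfm] at hconfB
  have hinl : (biprod.inl : Bo ⟶ Bo ⊞ X) ≫ h' = d := by
    have := congrArg (fun k => (biprod.inl : Bo ⟶ Bo ⊞ A) ≫ k) rel1
    simpa using this
  have hdesc : h' = biprod.desc d (biprod.inr ≫ h') := by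
    apply biprod.hom_ext' <;> simp [hinl]
  have hinfl : (biprod.inr : A ⟶ Bo ⊞ A) ≫ biprod.desc biprod.inl (biprod.lift f x)
      = biprod.lift f x := by simp
  rw [hinfl, hdesc] at hconfA
  have hcz := σ.comp_eq_zero hconfA
  rw [biprod.lift_desc] at hcz
  refine ⟨P, d, e, biprod.inr ≫ h', δ'', hconfB, hconfA, ?_, ?_⟩
  · have : f ≫ d + x ≫ (biprod.inr ≫ h') = 0 := hcz
    linear_combination (norm := abel) this
  · have := congrArg (fun k => (biprod.inr : X ⟶ Bo ⊞ X) ≫ k) rel2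
    simpa using this

end ExtStruct

end Devel4
section Devel5

open ZeroObject

namespace ExtStruct

variable {B : Type u} [Category.{v} B] [Preadditive B] [HasFiniteBiproducts B] (σ : ExtStruct B)

lemma pull_neg_mor {C' C A : B} (f : C' ⟶ C) (δ : σ.Ext C A) :
    σ.pull (-f) δ = -σ.pull f δ := by
  letI := σ.additive_snd A
  show (σ.E.map (-f).op).app A δ = _
  have h2 : ∀ (k : C' ⟶ C), (σ.E.map k.op).app A = (σ.E.flip.obj A).map (k.op) := fun _ => rfl
  have h0 : ((-f).op) = (-(f.op) : op C ⟶ op C') := rfl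
  rw [h2, h0, Functor.map_neg]; rfl

/-- The pullback of a conflation along a morphism into its cone, together with
the induced "mapping cocone" conflation. -/
lemma pullback_data {A X C Co : B} {δ : σ.Ext C A} {x : A ⟶ X} {y : X ⟶ C}
    (h : σ.realize δ x y) (g : Co ⟶ C) :
    ∃ (Q : B) (mq : A ⟶ Q) (e : Q ⟶ Co) (hq : Q ⟶ X) (μ : σ.Ext C Q),
      σ.realize (-(σ.pull g δ)) mq e ∧
      σ.realize μ (biprod.lift hq e) (biprod.desc y g) ∧
      hq ≫ y = -(e ≫ g) ∧ mq ≫ hq = x := by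
  have hsum := σ.realize_sum _ _ _ _ _ _ h (σ.realize_from_zero Co 0)
  -- hsum : realize (sumExt δ 0) (map x (0 : 0 ⟶ Co)) (map y (𝟙 Co))
  have ha1 : (biprod.inl : A ⟶ A ⊞ (0 : B)) ≫ biprod.fst = 𝟙 _ := by simp
  have ha2 : (biprod.fst : A ⊞ (0 : B) ⟶ A) ≫ biprod.inl = 𝟙 _ := by
    apply biprod.hom_ext'
    · simp
    · exact (Limits.isZero_zero B).eq_of_src _ _
  have h3 := σ.realize_iso_left (⟨biprod.inl, biprod.fst, ha1, ha2⟩ : A ≅ A ⊞ (0 : B)) hsum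
  rw [show (⟨biprod.inl, biprod.fst, ha1, ha2⟩ : A ≅ A ⊞ (0 : B)).inv = biprod.fst from rfl,
    show (⟨biprod.inl, biprod.fst, ha1, ha2⟩ : A ≅ A ⊞ (0 : B)).hom = biprod.inl from rfl] at h3
  have e3 : (biprod.inl : A ⟶ A ⊞ (0 : B)) ≫ biprod.map x (0 : (0 : B) ⟶ Co)
      = x ≫ biprod.inl := by simp
  rw [e3] at h3
  have hδ₁ : σ.push (biprod.fst : A ⊞ (0 : B) ⟶ A)
      (σ.toPreExtStruct.sumExt δ (0 : σ.Ext Co (0 : B)))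
      = σ.pull (biprod.fst : C ⊞ Co ⟶ C) δ := by
    rw [sumExt_eq, pull_zero, push_zero, add_zero, push_push]
    simp
  rw [hδ₁] at h3
  -- h3 : realize (pull fst δ) (x ≫ inl) (map y (𝟙 Co))
  set γ : C ⊞ Co ⟶ C ⊞ Co := biprod.desc biprod.inl (biprod.lift g (𝟙 Co)) with hγ
  set γ' : C ⊞ Co ⟶ C ⊞ Co := biprod.desc biprod.inl (biprod.lift (-g) (𝟙 Co)) with hγ'
  have hγγ' : γ ≫ γ' = 𝟙 _ := by
    apply biprod.hom_ext' <;> apply biprod.hom_ext <;>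
      simp [hγ, hγ', biprod.lift_desc]
  have hγ'γ : γ' ≫ γ = 𝟙 _ := by
    apply biprod.hom_ext' <;> apply biprod.hom_ext <;>
      simp [hγ, hγ', biprod.lift_desc]
  have h4 := σ.realize_iso_right (⟨γ', γ, hγ'γ, hγγ'⟩ : (C ⊞ Co) ≅ (C ⊞ Co)) h3
  rw [show (⟨γ', γ, hγ'γ, hγγ'⟩ : (C ⊞ Co) ≅ (C ⊞ Co)).inv = γ from rfl,
    show (⟨γ', γ, hγ'γ, hγγ'⟩ : (C ⊞ Co) ≅ (C ⊞ Co)).hom = γ' from rfl] at h4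
  have eδ₂ : σ.pull γ' (σ.pull (biprod.fst : C ⊞ Co ⟶ C) δ)
      = σ.pull (biprod.desc (𝟙 C) (-g)) δ := by
    rw [pull_pull]
    congr 1
    apply biprod.hom_ext' <;> simp [hγ']
  have er : biprod.map y (𝟙 Co) ≫ γ = biprod.desc (y ≫ biprod.inl) (biprod.lift g (𝟙 Co)) := by
    apply biprod.hom_ext' <;> simp [hγ]
  rw [eδ₂, er] at h4
  obtain ⟨Q, eA, d, m, δ'', rel1, rel2, hconf1, hconf2, rel5, rel6⟩ :=
    σ.et4op _ _ _ _ _ _ h4 (σ.realize_inr_fst C Co)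
  -- rel1 : m ≫ (desc (y≫inl) (lift g 𝟙)) = d ≫ inr ; rel2 : eA ≫ m = x ≫ inl
  -- hconf1 : realize δ'' m ((desc (y≫inl) (lift g 𝟙)) ≫ fst)
  -- hconf2 : realize (pull inr (pull (desc 𝟙 (-g)) δ)) eA d
  have hc2 : σ.pull (biprod.inr : Co ⟶ C ⊞ Co) (σ.pull (biprod.desc (𝟙 C) (-g)) δ)
      = -(σ.pull g δ) := by
    rw [pull_pull]
    have : (biprod.inr : Co ⟶ C ⊞ Co) ≫ biprod.desc (𝟙 C) (-g) = -g := by simp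
    rw [this, pull_neg_mor]
  rw [hc2] at hconf2
  have hrf : biprod.desc (y ≫ biprod.inl) (biprod.lift g (𝟙 Co)) ≫ (biprod.fst : C ⊞ Co ⟶ C)
      = biprod.desc y g := by
    apply biprod.hom_ext' <;> simp
  rw [hrf] at hconf1
  -- components of m
  have hm2 : m ≫ (biprod.snd : X ⊞ Co ⟶ Co) = d := by
    have h5 : biprod.desc (y ≫ biprod.inl) (biprod.lift g (𝟙 Co)) ≫ (biprod.snd : C ⊞ Co ⟶ Co)
        = biprod.snd := by apply biprod.hom_ext' <;> simp
    have := congrArg (fun k => k ≫ (biprod.snd : C ⊞ Co ⟶ Co)) rel1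
    simp only [Category.assoc, h5] at this
    simpa using this
  have hmdecomp : m = biprod.lift (m ≫ biprod.fst) d := by
    apply biprod.hom_ext <;> simp [hm2]
  have hrel : (m ≫ biprod.fst) ≫ y = -(d ≫ g) := by
    have := congrArg (fun k => k ≫ (biprod.fst : C ⊞ Co ⟶ C)) rel1
    simp only [Category.assoc, hrf] at this
    rw [hmdecomp] at this
    rw [biprod.lift_desc] at this
    simp only [biprod.inr_fst, comp_zero] at this
    -- this : (m≫fst) ≫ y + d ≫ g = 0
    linear_combination (norm := abel) this
  have hmx : eA ≫ (m ≫ biprod.fst) = x := by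
    have := congrArg (fun k => k ≫ (biprod.fst : X ⊞ Co ⟶ X)) rel2
    simpa using this
  rw [hmdecomp] at hconf1
  exact ⟨Q, eA, d, m ≫ biprod.fst, δ'', hconf2, hconf1, hrel, hmx⟩

end ExtStruct

end Devel5
section Devel6

open ZeroObject

namespace ExtStruct

variable {B : Type u} [Category.{v} B] [Preadditive B] [HasFiniteBiproducts B] (σ : ExtStruct B)

lemma push_sub_mor {C A A' : B} (f g : A ⟶ A') (δ : σ.Ext C A) :
    σ.push (f - g) δ = σ.push f δ - σ.push g δ := by
  letI := σ.additive_fst (op C)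
  show ((σ.E.obj (op C)).map (f - g)) δ = _
  rw [Functor.map_sub]; rfl

variable {S T U V : Set B} (twin : σ.IsTwinCotorsionPair S T U V)
include twin

section Membership

lemma mem_T_of_vanish {X : B} (h : ∀ ⦃S' : B⦄, S' ∈ S → ∀ δ : σ.Ext S' X, δ = 0) :
    X ∈ T := by
  obtain ⟨T₀, S₁, f, g, hT₀, hS₁, δc, hre⟩ := twin.fst.coresolve X
  rw [h hS₁ δc] at hre
  obtain ⟨r, hr⟩ := σ.retraction_of_realize_zero hre
  exact twin.fst.addV.summand_mem X T₀ hT₀ f r hr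

lemma mem_U_of_vanish {X : B} (h : ∀ ⦃V' : B⦄, V' ∈ V → ∀ δ : σ.Ext X V', δ = 0) :
    X ∈ U := by
  obtain ⟨V₀, U₀, f, g, hV₀, hU₀, δc, hre⟩ := twin.snd.resolve X
  rw [h hV₀ δc] at hre
  obtain ⟨s, hs⟩ := σ.section_of_realize_zero hre
  exact twin.snd.addU.summand_mem X U₀ hU₀ s g hs

lemma mem_S_of_vanish {X : B} (h : ∀ ⦃T' : B⦄, T' ∈ T → ∀ δ : σ.Ext X T', δ = 0) :
    X ∈ S := by
  obtain ⟨Tm, Sm, f, g, hTm, hSm, δc, hre⟩ := twin.fst.resolve X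
  rw [h hTm δc] at hre
  obtain ⟨s, hs⟩ := σ.section_of_realize_zero hre
  exact twin.fst.addU.summand_mem X Sm hSm s g hs

lemma mem_V_of_vanish {X : B} (h : ∀ ⦃U' : B⦄, U' ∈ U → ∀ δ : σ.Ext U' X, δ = 0) :
    X ∈ V := by
  obtain ⟨V₀, U₀, f, g, hV₀, hU₀, δc, hre⟩ := twin.snd.coresolve X
  rw [h hU₀ δc] at hre
  obtain ⟨r, hr⟩ := σ.retraction_of_realize_zero hre
  exact twin.snd.addV.summand_mem X V₀ hV₀ f r hr

lemma V_subset_T : V ⊆ T := fun V' hV' =>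
  σ.mem_T_of_vanish twin (fun S' hS' δ => twin.ext_SV hS' hV' δ)

lemma S_subset_U : S ⊆ U := fun S' hS' =>
  σ.mem_U_of_vanish twin (fun V' hV' δ => twin.ext_SV hS' hV' δ)

/-! extension closure -/

lemma T_ext_closed {A X C : B} {δ : σ.Ext C A} {x : A ⟶ X} {y : X ⟶ C}
    (h : σ.realize δ x y) (hA : A ∈ T) (hC : C ∈ T) : X ∈ T := by
  refine σ.mem_T_of_vanish twin (fun S' hS' χ => ?_)
  have h1 : σ.push y χ = 0 := twin.fst.ext_vanish hS' hC _
  obtain ⟨τ, hτ⟩ := σ.exists_push_infl_of_push_defl_zero h χ h1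
  rw [← hτ, twin.fst.ext_vanish hS' hA τ, push_zero]

lemma V_ext_closed {A X C : B} {δ : σ.Ext C A} {x : A ⟶ X} {y : X ⟶ C}
    (h : σ.realize δ x y) (hA : A ∈ V) (hC : C ∈ V) : X ∈ V := by
  refine σ.mem_V_of_vanish twin (fun U' hU' χ => ?_)
  have h1 : σ.push y χ = 0 := twin.snd.ext_vanish hU' hC _
  obtain ⟨τ, hτ⟩ := σ.exists_push_infl_of_push_defl_zero h χ h1
  rw [← hτ, twin.snd.ext_vanish hU' hA τ, push_zero]

lemma U_ext_closed {A X C : B} {δ : σ.Ext C A} {x : A ⟶ X} {y : X ⟶ C}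
    (h : σ.realize δ x y) (hA : A ∈ U) (hC : C ∈ U) : X ∈ U := by
  refine σ.mem_U_of_vanish twin (fun V' hV' χ => ?_)
  have h1 : σ.pull x χ = 0 := twin.snd.ext_vanish hA hV' _
  obtain ⟨τ, hτ⟩ := σ.exists_pull_defl_of_pull_infl_zero h χ h1
  rw [← hτ, twin.snd.ext_vanish hC hV' τ, pull_zero]

lemma S_ext_closed {A X C : B} {δ : σ.Ext C A} {x : A ⟶ X} {y : X ⟶ C}
    (h : σ.realize δ x y) (hA : A ∈ S) (hC : C ∈ S) : X ∈ S := by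
  refine σ.mem_S_of_vanish twin (fun T' hT' χ => ?_)
  have h1 : σ.pull x χ = 0 := twin.fst.ext_vanish hA hT' _
  obtain ⟨τ, hτ⟩ := σ.exists_pull_defl_of_pull_infl_zero h χ h1
  rw [← hτ, twin.fst.ext_vanish hC hT' τ, pull_zero]

/-! membership in `B⁻` and `B⁺` -/

lemma S_subset_tNeg : S ⊆ σ.tNeg S T U := by
  intro S' hS'
  obtain ⟨T₀, S₁, f, g, hT₀, hS₁, hconf⟩ := twin.fst.coresolve S'
  obtain ⟨δc, hre⟩ := hconf
  have hT₀U : T₀ ∈ U :=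
    σ.U_ext_closed twin hre (σ.S_subset_U twin hS') (σ.S_subset_U twin hS₁)
  exact ⟨T₀, S₁, f, g, ⟨hT₀, hT₀U⟩, hS₁, δc, hre⟩

lemma V_subset_tPos : V ⊆ σ.tPos T U V := by
  intro V' hV'
  obtain ⟨V₀, U₀, f, g, hV₀, hU₀, hconf⟩ := twin.snd.resolve V'
  obtain ⟨δc, hre⟩ := hconf
  have hU₀T : U₀ ∈ T :=
    σ.T_ext_closed twin hre (σ.V_subset_T twin hV₀) (σ.V_subset_T twin hV')
  exact ⟨V₀, U₀, f, g, hV₀, ⟨hU₀T, hU₀⟩, δc, hre⟩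

lemma W_subset_tNeg {W' : B} (hW' : W' ∈ T ∩ U) : W' ∈ σ.tNeg S T U :=
  ⟨W', (0 : B), 𝟙 W', 0, hW', twin.fst.addU.zero_mem _ (Limits.isZero_zero B),
    0, σ.realize_to_zero W' 0⟩

lemma W_subset_tPos {W' : B} (hW' : W' ∈ T ∩ U) : W' ∈ σ.tPos T U V :=
  ⟨(0 : B), W', 0, 𝟙 W', twin.snd.addV.zero_mem _ (Limits.isZero_zero B), hW',
    0, σ.realize_from_zero W' 0⟩

lemma tNeg_of_iso {X X' : B} (i : X' ≅ X) (hX : X ∈ σ.tNeg S T U) :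
    X' ∈ σ.tNeg S T U := by
  obtain ⟨Y, C, f, g, hY, hC, δc, hre⟩ := hX
  exact ⟨Y, C, i.hom ≫ f, g, hY, hC, _, σ.realize_iso_left i hre⟩

lemma tPos_of_iso {X X' : B} (i : X' ≅ X) (hX : X ∈ σ.tPos T U V) :
    X' ∈ σ.tPos T U V := by
  obtain ⟨A, Y, f, g, hA, hY, δc, hre⟩ := hX
  exact ⟨A, Y, f, g ≫ i.inv, hA, hY, _, σ.realize_iso_right i hre⟩

lemma tNeg_biprod {X₁ X₂ : B} (h1 : X₁ ∈ σ.tNeg S T U) (h2 : X₂ ∈ σ.tNeg S T U) :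
    (X₁ ⊞ X₂) ∈ σ.tNeg S T U := by
  obtain ⟨Y₁, C₁, f₁, g₁, hY₁, hC₁, δ₁, hre₁⟩ := h1
  obtain ⟨Y₂, C₂, f₂, g₂, hY₂, hC₂, δ₂, hre₂⟩ := h2
  exact ⟨Y₁ ⊞ Y₂, C₁ ⊞ C₂, biprod.map f₁ f₂, biprod.map g₁ g₂,
    ⟨(twin.fst.addV.biprod_mem _ _ hY₁.1 hY₂.1 : _),
      twin.snd.addU.biprod_mem _ _ hY₁.2 hY₂.2⟩,
    twin.fst.addU.biprod_mem _ _ hC₁ hC₂, _,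
    σ.realize_sum _ _ _ _ _ _ hre₁ hre₂⟩

lemma tPos_biprod {X₁ X₂ : B} (h1 : X₁ ∈ σ.tPos T U V) (h2 : X₂ ∈ σ.tPos T U V) :
    (X₁ ⊞ X₂) ∈ σ.tPos T U V := by
  obtain ⟨A₁, Y₁, f₁, g₁, hA₁, hY₁, δ₁, hre₁⟩ := h1
  obtain ⟨A₂, Y₂, f₂, g₂, hA₂, hY₂, δ₂, hre₂⟩ := h2
  exact ⟨A₁ ⊞ A₂, Y₁ ⊞ Y₂, biprod.map f₁ f₂, biprod.map g₁ g₂,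
    twin.snd.addV.biprod_mem _ _ hA₁ hA₂,
    ⟨twin.fst.addV.biprod_mem _ _ hY₁.1 hY₂.1,
      twin.snd.addU.biprod_mem _ _ hY₁.2 hY₂.2⟩, _,
    σ.realize_sum _ _ _ _ _ _ hre₁ hre₂⟩

/-- (**): the base of a conflation with middle term in `B⁻` and cone in `S` is in `B⁻`. -/
lemma tNeg_of_conf_into {X P S₀ : B} {δ : σ.Ext S₀ X} {q : X ⟶ P} {p : P ⟶ S₀}
    (h : σ.realize δ q p) (hS₀ : S₀ ∈ S) (hP : P ∈ σ.tNeg S T U) :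
    X ∈ σ.tNeg S T U := by
  obtain ⟨WP, SP, wP, yP, hWP, hSP, δP, hreP⟩ := hP
  obtain ⟨E₀, d, e, h', δ'', _, _, hconfA, hconfB, _, _⟩ := σ.et4 _ _ _ _ _ _ h hreP
  have hE₀ : E₀ ∈ S := σ.S_ext_closed twin hconfB hS₀ hSP
  exact ⟨WP, E₀, q ≫ wP, h', hWP, hE₀, _, hconfA⟩

/-- dual (**): the cone of a conflation with middle term in `B⁺` and base in `V`
is in `B⁺`. -/
lemma tPos_of_conf_from {V₀ Q X : B} {δ : σ.Ext X V₀} {v : V₀ ⟶ Q} {q : Q ⟶ X}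
    (h : σ.realize δ v q) (hV₀ : V₀ ∈ V) (hQ : Q ∈ σ.tPos T U V) :
    X ∈ σ.tPos T U V := by
  obtain ⟨VQ, WQ, vQ, πQ, hVQ, hWQ, δQ, hreQ⟩ := hQ
  obtain ⟨E₀, e, d, m, δ'', _, _, hconf1, hconf2, _, _⟩ := σ.et4op _ _ _ _ _ _ hreQ h
  have hE₀ : E₀ ∈ V := σ.V_ext_closed twin hconf2 hVQ hV₀
  exact ⟨E₀, WQ, m, πQ ≫ q, hE₀, hWQ, _, hconf1⟩

end Membership

end ExtStruct

end Devel6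
section Devel7

open ZeroObject

namespace ExtStruct

variable {B : Type u} [Category.{v} B] [Preadditive B] [HasFiniteBiproducts B] (σ : ExtStruct B)

/-! ### uniqueness of cocones -/

lemma cocone_unique {A₁ A₂ X C : B} {δ₁ : σ.Ext C A₁} {δ₂ : σ.Ext C A₂} {x₁ : A₁ ⟶ X}
    {x₂ : A₂ ⟶ X} {y : X ⟶ C} (h1 : σ.realize δ₁ x₁ y) (h2 : σ.realize δ₂ x₂ y) :
    ∃ a : A₁ ≅ A₂, a.hom ≫ x₂ = x₁ ∧ σ.push a.hom δ₁ = δ₂ := by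
  obtain ⟨a, ha1, ha2⟩ := σ.et3op _ _ _ _ _ _ h1 h2 (𝟙 X) (𝟙 C) (by simp)
  rw [pull_id] at ha1
  rw [Category.comp_id] at ha2
  have surj : ∀ {Q : B} (u : A₁ ⟶ Q), ∃ v : A₂ ⟶ Q, a ≫ v = u := by
    intro Q u
    have h0 : σ.pull y (σ.push u δ₁) = 0 := by
      rw [← push_pull, σ.pull_defl h1, push_zero]
    obtain ⟨lam, hlam⟩ := σ.exists_push_of_pull_defl_zero h2 (σ.push u δ₁) h0
    have : σ.push (a ≫ lam - u) δ₁ = 0 := by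
      rw [push_sub_mor, ← push_push, ha1, hlam, sub_self]
    obtain ⟨g, hg⟩ := σ.exists_ext_of_push_eq_zero h1 _ this
    refine ⟨lam - x₂ ≫ g, ?_⟩
    rw [Preadditive.comp_sub, ← Category.assoc, ← ha2]
    rw [hg]; abel
  have inj : ∀ {Q : B} (u : A₂ ⟶ Q), a ≫ u = 0 → u = 0 := by
    intro Q u hu
    have : σ.push u δ₂ = 0 := by
      rw [← ha1, push_push, hu, push_zero_mor]
    obtain ⟨g, hg⟩ := σ.exists_ext_of_push_eq_zero h2 u this
    have hx1g : x₁ ≫ g = 0 := by rw [ha2, Category.assoc, hg, hu]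
    obtain ⟨t, ht⟩ := σ.weak_coker h1 g hx1g
    rw [← hg, ← ht, ← Category.assoc, σ.comp_eq_zero h2, zero_comp]
  obtain ⟨v, hv⟩ := surj (𝟙 A₁)
  have hva : v ≫ a = 𝟙 A₂ := by
    have h0 : a ≫ (v ≫ a - 𝟙 A₂) = 0 := by
      rw [Preadditive.comp_sub, ← Category.assoc, hv, Category.comp_id,
        Category.id_comp, sub_self]
    have := inj _ h0
    rwa [sub_eq_zero] at this
  exact ⟨⟨a, v, hv, hva⟩, ha2.symm, ha1⟩

/-! ### two-sided pushouts and pullbacks -/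

lemma two_sided_pushout {A X C X' C' : B} {δ : σ.Ext C A} {x : A ⟶ X} {y : X ⟶ C}
    {δ' : σ.Ext C' A} {x' : A ⟶ X'} {y' : X' ⟶ C'}
    (h : σ.realize δ x y) (h' : σ.realize δ' x' y') :
    ∃ (P : B) (m : X ⟶ P) (e : P ⟶ C') (m' : X' ⟶ P) (e' : P ⟶ C),
      σ.realize (-(σ.push x δ')) m e ∧ σ.realize (-(σ.push x' δ)) m' e' := by
  obtain ⟨P, m, e, hm, μ, hc1, hc2, _, _⟩ := σ.pushout_data h' x
  obtain ⟨P₂, m₂, e₂, hm₂, μ₂, hd1, hd2, _, _⟩ := σ.pushout_data h x'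
  have hb1 : (biprod.lift biprod.snd biprod.fst : X' ⊞ X ⟶ X ⊞ X') ≫
      (biprod.lift biprod.snd biprod.fst : X ⊞ X' ⟶ X' ⊞ X) = 𝟙 _ := by
    apply biprod.hom_ext <;> simp
  have hb2 : (biprod.lift biprod.snd biprod.fst : X ⊞ X' ⟶ X' ⊞ X) ≫
      (biprod.lift biprod.snd biprod.fst : X' ⊞ X ⟶ X ⊞ X') = 𝟙 _ := by
    apply biprod.hom_ext <;> simp
  have hd2' := σ.realize_iso _ _ _ (⟨biprod.lift biprod.snd biprod.fst,
    biprod.lift biprod.snd biprod.fst, hb1, hb2⟩ : (X' ⊞ X) ≅ (X ⊞ X')) hd2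
  rw [show (⟨biprod.lift biprod.snd biprod.fst, biprod.lift biprod.snd biprod.fst, hb1, hb2⟩ :
      (X' ⊞ X) ≅ (X ⊞ X')).hom = biprod.lift biprod.snd biprod.fst from rfl,
    show (⟨biprod.lift biprod.snd biprod.fst, biprod.lift biprod.snd biprod.fst, hb1, hb2⟩ :
      (X' ⊞ X) ≅ (X ⊞ X')).inv = biprod.lift biprod.snd biprod.fst from rfl] at hd2'
  have e1 : biprod.lift x' x ≫ (biprod.lift biprod.snd biprod.fst : X' ⊞ X ⟶ X ⊞ X')
      = biprod.lift x x' := by apply biprod.hom_ext <;> simp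
  have e2 : (biprod.lift biprod.snd biprod.fst : X ⊞ X' ⟶ X' ⊞ X) ≫ biprod.desc m₂ hm₂
      = biprod.desc hm₂ m₂ := by apply biprod.hom_ext' <;> simp
  rw [e1, e2] at hd2'
  obtain ⟨c, hcc, _⟩ := σ.cone_unique hc2 hd2'
  have hm₂c : m₂ ≫ c.inv = hm := by
    have := congrArg (fun k => (biprod.inr : X' ⟶ X ⊞ X') ≫ k) hcc
    simp only [biprod.inr_desc] at this
    rw [← Category.assoc, biprod.inr_desc] at this
    rw [← this, Category.assoc, Iso.hom_inv_id, Category.comp_id]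
  have htr := σ.realize_iso _ _ _ c.symm hd1
  rw [Iso.symm_hom, Iso.symm_inv, hm₂c] at htr
  exact ⟨P, m, e, hm, c.hom ≫ e₂, hc1, htr⟩

lemma two_sided_pullback {A X C A' X' : B} {δ : σ.Ext C A} {x : A ⟶ X} {y : X ⟶ C}
    {δ' : σ.Ext C A'} {x' : A' ⟶ X'} {y' : X' ⟶ C}
    (h : σ.realize δ x y) (h' : σ.realize δ' x' y') :
    ∃ (Q : B) (mq : A ⟶ Q) (e : Q ⟶ X') (mq' : A' ⟶ Q) (e' : Q ⟶ X),
      σ.realize (-(σ.pull y' δ)) mq e ∧ σ.realize (-(σ.pull y δ')) mq' e' := by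
  obtain ⟨Q, mq, e, hq, μ, hc1, hc2, _, _⟩ := σ.pullback_data h y'
  obtain ⟨Q₂, mq₂, e₂, hq₂, μ₂, hd1, hd2, _, _⟩ := σ.pullback_data h' y
  have hb1 : (biprod.lift biprod.snd biprod.fst : X' ⊞ X ⟶ X ⊞ X') ≫
      (biprod.lift biprod.snd biprod.fst : X ⊞ X' ⟶ X' ⊞ X) = 𝟙 _ := by
    apply biprod.hom_ext <;> simp
  have hb2 : (biprod.lift biprod.snd biprod.fst : X ⊞ X' ⟶ X' ⊞ X) ≫
      (biprod.lift biprod.snd biprod.fst : X' ⊞ X ⟶ X ⊞ X') = 𝟙 _ := by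
    apply biprod.hom_ext <;> simp
  have hd2' := σ.realize_iso _ _ _ (⟨biprod.lift biprod.snd biprod.fst,
    biprod.lift biprod.snd biprod.fst, hb1, hb2⟩ : (X' ⊞ X) ≅ (X ⊞ X')) hd2
  rw [show (⟨biprod.lift biprod.snd biprod.fst, biprod.lift biprod.snd biprod.fst, hb1, hb2⟩ :
      (X' ⊞ X) ≅ (X ⊞ X')).hom = biprod.lift biprod.snd biprod.fst from rfl,
    show (⟨biprod.lift biprod.snd biprod.fst, biprod.lift biprod.snd biprod.fst, hb1, hb2⟩ :
      (X' ⊞ X) ≅ (X ⊞ X')).inv = biprod.lift biprod.snd biprod.fst from rfl] at hd2'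
  have e1 : biprod.lift hq₂ e₂ ≫ (biprod.lift biprod.snd biprod.fst : X' ⊞ X ⟶ X ⊞ X')
      = biprod.lift e₂ hq₂ := by apply biprod.hom_ext <;> simp
  have e2 : (biprod.lift biprod.snd biprod.fst : X ⊞ X' ⟶ X' ⊞ X) ≫ biprod.desc y' y
      = biprod.desc y y' := by apply biprod.hom_ext' <;> simp
  rw [e1, e2] at hd2'
  obtain ⟨a, haa, _⟩ := σ.cocone_unique hc2 hd2'
  have hahq : a.hom ≫ e₂ = hq := by
    have := congrArg (fun k => k ≫ (biprod.fst : X ⊞ X' ⟶ X)) haa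
    simpa using this
  have htr := σ.realize_iso _ _ _ a.symm hd1
  rw [Iso.symm_hom, Iso.symm_inv, hahq] at htr
  exact ⟨Q, mq, e, mq₂ ≫ a.inv, hq, hc1, htr⟩

/-! ### extension closure of `B⁻` and `B⁺` -/

variable {S T U V : Set B} (twin : σ.IsTwinCotorsionPair S T U V)
include twin

lemma tNeg_extension {X M S₀ : B} {δ : σ.Ext S₀ X} {m : X ⟶ M} {e : M ⟶ S₀}
    (h : σ.realize δ m e) (hX : X ∈ σ.tNeg S T U) (hS₀ : S₀ ∈ S) :
    M ∈ σ.tNeg S T U := by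
  obtain ⟨W₂, S₂, w₂, y₂, hW₂, hS₂, δ₂, hre₂⟩ := hX
  obtain ⟨P, m₁, e₁, m₂, e₂, hP1, hP2⟩ := σ.two_sided_pushout h hre₂
  have hz : -(σ.push w₂ δ) = 0 := by
    rw [twin.fst.ext_vanish hS₀ hW₂.1 (σ.push w₂ δ), neg_zero]
  rw [hz] at hP2
  obtain ⟨b, _, _⟩ := σ.split_iso_of_realize_zero hP2
  have hPneg : P ∈ σ.tNeg S T U :=
    σ.tNeg_of_iso twin b (σ.tNeg_biprod twin (σ.W_subset_tNeg twin hW₂)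
      (σ.S_subset_tNeg twin hS₀))
  exact σ.tNeg_of_conf_into twin hP1 hS₂ hPneg

lemma tPos_extension {A X Cc : B} {δ : σ.Ext Cc A} {x : A ⟶ X} {y : X ⟶ Cc}
    (h : σ.realize δ x y) (hA : A ∈ V) (hCc : Cc ∈ σ.tPos T U V) :
    X ∈ σ.tPos T U V := by
  obtain ⟨Vc, Wc, vc, πc, hVc, hWc, ρc, hrec⟩ := hCc
  obtain ⟨Q, mq, e, mq', e', hQ1, hQ2⟩ := σ.two_sided_pullback h hrec
  have hz : -(σ.pull πc δ) = 0 := by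
    rw [twin.snd.ext_vanish hWc.2 hA (σ.pull πc δ), neg_zero]
  rw [hz] at hQ1
  obtain ⟨b, _, _⟩ := σ.split_iso_of_realize_zero hQ1
  have hQpos : Q ∈ σ.tPos T U V :=
    σ.tPos_of_iso twin b (σ.tPos_biprod twin (σ.V_subset_tPos twin hA)
      (σ.W_subset_tPos twin hWc))
  exact σ.tPos_of_conf_from twin hQ2 hVc hQpos

end ExtStruct

end Devel7
section Devel8

open ZeroObject

lemma mem_wIdeal_iff_of_addClosed {B : Type u} [Category.{v} B] [Preadditive B]
    [HasFiniteBiproducts B] {W₀ : Set B} (hW : AddClosed W₀) {X Y : B} (f : X ⟶ Y) :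
    f ∈ wIdeal W₀ X Y ↔ ∃ Z ∈ W₀, ∃ p : X ⟶ Z, ∃ q : Z ⟶ Y, f = p ≫ q := by
  constructor
  · intro hf
    refine AddSubgroup.closure_induction (p := fun g _ =>
      ∃ Z ∈ W₀, ∃ p : X ⟶ Z, ∃ q : Z ⟶ Y, g = p ≫ q) ?_ ?_ ?_ ?_ hf
    · exact fun g hg => hg
    · exact ⟨(0 : B), hW.zero_mem _ (Limits.isZero_zero B), 0, 0, by simp⟩
    · rintro g₁ g₂ _ _ ⟨Z₁, hZ₁, p₁, q₁, rfl⟩ ⟨Z₂, hZ₂, p₂, q₂, rfl⟩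
      exact ⟨Z₁ ⊞ Z₂, hW.biprod_mem _ _ hZ₁ hZ₂, biprod.lift p₁ p₂, biprod.desc q₁ q₂,
        by rw [biprod.lift_desc]⟩
    · rintro g _ ⟨Z, hZ, p, q, rfl⟩
      exact ⟨Z, hZ, -p, q, by simp⟩
  · rintro ⟨Z, hZ, p, q, rfl⟩
    exact AddSubgroup.subset_closure ⟨Z, hZ, p, q, rfl⟩

namespace ExtStruct

variable {B : Type u} [Category.{v} B] [Preadditive B] [HasFiniteBiproducts B] (σ : ExtStruct B)

/-! ### lifting E-classes through conflations -/

lemma lift_class_along_defl {V₀ Wm Y Xc Sc : B}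
    {ρ : σ.Ext Y V₀} {v : V₀ ⟶ Wm} {π : Wm ⟶ Y} (hρ : σ.realize ρ v π)
    {χ : σ.Ext Sc Y} {m : Y ⟶ Xc} {e : Xc ⟶ Sc} (hχ : σ.realize χ m e)
    {η : σ.Ext Xc V₀} (hη : σ.pull m η = ρ) :
    ∃ χ' : σ.Ext Sc Wm, σ.push π χ' = χ := by
  obtain ⟨G, a, b, hre⟩ := σ.realize_ex η
  obtain ⟨E₀, e₅, d₅, m₅, δ₅, _, _, _, hconf2, rel5, _⟩ := σ.et4op η a b χ m e hre hχ
  rw [hη] at hconf2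
  obtain ⟨κ, _, hκ2⟩ := σ.realize_unique _ _ _ _ _ hconf2 hρ
  exact ⟨σ.push κ.hom δ₅, by rw [push_push, hκ2, rel5]⟩

lemma lift_class_along_infl {V₀ Xθ B₀ Z Sp : B}
    {θ : σ.Ext B₀ V₀} {e' : V₀ ⟶ Xθ} {m' : Xθ ⟶ B₀} (hθ : σ.realize θ e' m')
    {δZ : σ.Ext Sp B₀} {z : B₀ ⟶ Z} {sz : Z ⟶ Sp} (hz : σ.realize δZ z sz)
    {η : σ.Ext Sp Xθ} (hη : σ.push m' η = δZ) :
    ∃ ξ : σ.Ext Z V₀, σ.pull z ξ = θ := by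
  obtain ⟨G, a, b, hre⟩ := σ.realize_ex η
  obtain ⟨E₁, d₁, e₁, h₁, δ₁, _, _, _, hBE, rel5, _⟩ := σ.et4 θ e' m' η a b hθ hre
  rw [hη] at hBE
  obtain ⟨κ, hκ1, _⟩ := σ.realize_unique _ _ _ _ _ hBE hz
  refine ⟨σ.pull κ.inv δ₁, ?_⟩
  have hz' : z ≫ κ.inv = d₁ := by
    rw [← hκ1, Category.assoc, Iso.hom_inv_id, Category.comp_id]
  rw [pull_pull, hz', rel5]

/-! ### reflection and coreflection sequences -/

variable {S T U V : Set B} (twin : σ.IsTwinCotorsionPair S T U V)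
include twin

lemma reflection_exists (B₀ : B) :
    ∃ (Z S₀ : B) (z : B₀ ⟶ Z) (sz : Z ⟶ S₀) (δZ : σ.Ext S₀ B₀),
      σ.realize δZ z sz ∧ S₀ ∈ S ∧ Z ∈ σ.tPos T U V ∧
      ∀ ⦃V₀ : B⦄, V₀ ∈ V → ∀ θ : σ.Ext B₀ V₀, ∃ ξ : σ.Ext Z V₀, σ.pull z ξ = θ := by
  obtain ⟨V', N, aν, bν, hV', hN, ν₀, hreν⟩ := twin.snd.resolve B₀
  obtain ⟨W', SN, tN, sN, hW'T, hSN, hcN⟩ := twin.fst.coresolve N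
  obtain ⟨δN, hreN⟩ := hcN
  have hW'U : W' ∈ U := σ.U_ext_closed twin hreN hN (σ.S_subset_U twin hSN)
  obtain ⟨Z, d₅, e₅, h₅, δ₅, rel1, rel2, hconfV, hconfB, rel5, rel6⟩ :=
    σ.et4 ν₀ aν bν δN tN sN hreν hreN
  refine ⟨Z, SN, d₅, e₅, σ.push bν δN, hconfB, hSN,
    ⟨V', W', aν ≫ tN, h₅, hV', ⟨hW'T, hW'U⟩, δ₅, hconfV⟩, ?_⟩
  intro V₀ hV₀ θ
  have h0 : σ.pull bν θ = 0 := twin.snd.ext_vanish hN hV₀ _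
  obtain ⟨lam, hlam⟩ := σ.exists_push_of_pull_defl_zero hreν θ h0
  exact ⟨σ.push lam δ₅, by rw [← push_pull, rel5, hlam]⟩

lemma coreflection_exists (B₀ : B) :
    ∃ (Z V₁ : B) (v : V₁ ⟶ Z) (d : Z ⟶ B₀) (νb : σ.Ext B₀ V₁),
      σ.realize νb v d ∧ V₁ ∈ V ∧ Z ∈ σ.tNeg S T U ∧
      ∀ ⦃S₀ : B⦄, S₀ ∈ S → ∀ χ : σ.Ext S₀ B₀, ∃ ξ : σ.Ext S₀ Z, σ.push d ξ = χ := by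
  obtain ⟨Tn, Sn, t, s, hTn, hSn, hct⟩ := twin.fst.coresolve B₀
  obtain ⟨δt, hret⟩ := hct
  obtain ⟨V₁, U₁, v, u, hV₁, hU₁, hcu⟩ := twin.snd.resolve Tn
  obtain ⟨δu, hreu⟩ := hcu
  have hU₁T : U₁ ∈ T := σ.T_ext_closed twin hreu (σ.V_subset_T twin hV₁) hTn
  obtain ⟨Z, e, d, m, δ'', rel1, rel2, hconf1, hconf2, rel5, rel6⟩ :=
    σ.et4op δu v u δt t s hreu hret
  refine ⟨Z, V₁, e, d, σ.pull t δu, hconf2, hV₁,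
    ⟨U₁, Sn, m, u ≫ s, ⟨hU₁T, hU₁⟩, hSn, δ'', hconf1⟩, ?_⟩
  intro S₀ hS₀ χ
  have h0 : σ.push t χ = 0 := twin.fst.ext_vanish hS₀ hTn _
  obtain ⟨lam, hlam⟩ := σ.exists_pull_of_push_infl_zero hret χ h0
  exact ⟨σ.pull lam δ'', by rw [push_pull, rel5, hlam]⟩

end ExtStruct

end Devel8
section Devel9

open ZeroObject

namespace ExtStruct

variable {B : Type u} [Category.{v} B] [Preadditive B] [HasFiniteBiproducts B] (σ : ExtStruct B)

variable {S T U V : Set B} (twin : σ.IsTwinCotorsionPair S T U V)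
include twin

/-- Exact factorization through a reflection sequence: any morphism to an object
of `B⁺` extends along the inflation of a reflection sequence. -/
lemma factor_through_reflection {M Z S₀ : B} {δZ : σ.Ext S₀ M} {z : M ⟶ Z}
    {sz : Z ⟶ S₀} (hz : σ.realize δZ z sz) (hS₀ : S₀ ∈ S)
    (hsurj : ∀ ⦃V₀ : B⦄, V₀ ∈ V → ∀ θ : σ.Ext M V₀, ∃ ξ : σ.Ext Z V₀, σ.pull z ξ = θ)
    {Y : B} (hY : Y ∈ σ.tPos T U V) (g : M ⟶ Y) :
    ∃ φ : Z ⟶ Y, z ≫ φ = g := by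
  obtain ⟨Vy, Wy, vy, π, hVy, hWy, ρ, hreρ⟩ := hY
  obtain ⟨Xc, m, e, hm, μ, hconfχ, hextra, _, _⟩ := σ.pushout_data hz g
  obtain ⟨ξ, hξ⟩ := hsurj hVy (σ.pull g ρ)
  have hΘ : σ.pull (biprod.lift g z)
      (σ.pull (biprod.fst : Y ⊞ Z ⟶ Y) ρ - σ.pull (biprod.snd : Y ⊞ Z ⟶ Z) ξ) = 0 := by
    rw [pull_sub, pull_pull, pull_pull]
    simp only [biprod.lift_fst, biprod.lift_snd]
    rw [hξ, sub_self]
  obtain ⟨η, hη⟩ := σ.exists_pull_defl_of_pull_infl_zero hextra _ hΘ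
  have hmη : σ.pull m η = ρ := by
    have h1 : m = biprod.inl ≫ biprod.desc m hm := by simp
    rw [h1, ← pull_pull, hη, pull_sub, pull_pull, pull_pull]
    simp
  obtain ⟨χ', hχ'⟩ := σ.lift_class_along_defl hreρ hconfχ hmη
  have hχ'0 : χ' = 0 := twin.fst.ext_vanish hS₀ hWy.1 χ'
  rw [hχ'0, push_zero] at hχ'
  have : σ.push g δZ = 0 := by
    have := hχ'.symm
    rwa [neg_eq_zero] at this
  exact σ.exists_ext_of_push_eq_zero hz g this

/-- Exact factorization through a coreflection sequence: any morphism from an object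
of `B⁻` lifts along the deflation of a coreflection sequence. -/
lemma factor_through_coreflection {K Zb V₁ : B} {νb : σ.Ext K V₁} {v : V₁ ⟶ Zb}
    {d : Zb ⟶ K} (hν : σ.realize νb v d) (hV₁ : V₁ ∈ V)
    (hcosurj : ∀ ⦃S₀ : B⦄, S₀ ∈ S → ∀ χ : σ.Ext S₀ K, ∃ ξ : σ.Ext S₀ Zb, σ.push d ξ = χ)
    {Y : B} (hY : Y ∈ σ.tNeg S T U) (t : Y ⟶ K) :
    ∃ ψ : Y ⟶ Zb, ψ ≫ d = t := by
  obtain ⟨Wy, Sy, wy, yy, hWy, hSy, δY, hreY⟩ := hY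
  obtain ⟨Q, mq, e, hq, μ, hconfχ, hextra, _, _⟩ := σ.pullback_data hν t
  obtain ⟨ξ, hξ⟩ := hcosurj hSy (σ.push t δY)
  have hΘ : σ.push (biprod.desc d t)
      (σ.push (biprod.inl : Zb ⟶ Zb ⊞ Y) ξ - σ.push (biprod.inr : Y ⟶ Zb ⊞ Y) δY) = 0 := by
    rw [push_sub, push_push, push_push]
    simp only [biprod.inl_desc, biprod.inr_desc]
    rw [hξ, sub_self]
  obtain ⟨η, hη⟩ := σ.exists_push_infl_of_push_defl_zero hextra _ hΘ
  have heη : σ.push e (-η) = δY := by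
    have h1 : e = biprod.lift hq e ≫ biprod.snd := by simp
    rw [push_neg, h1, ← push_push, hη, push_sub, push_push, push_push]
    simp
  obtain ⟨ξ₂, hξ₂⟩ := σ.lift_class_along_infl hconfχ hreY heη
  have hξ₂0 : ξ₂ = 0 := twin.snd.ext_vanish hWy.2 hV₁ ξ₂
  rw [hξ₂0, pull_zero] at hξ₂
  have : σ.pull t νb = 0 := by
    have := hξ₂.symm
    rwa [neg_eq_zero] at this
  exact σ.exists_lift_of_pull_eq_zero hν t this

end ExtStruct

end Devel9
section Devel10

open ZeroObject

namespace ExtStruct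

variable {B : Type u} [Category.{v} B] [Preadditive B] [HasFiniteBiproducts B] (σ : ExtStruct B)

variable {S T U V : Set B} (twin : σ.IsTwinCotorsionPair S T U V)

omit twin in
lemma mem_wIdeal_of_factor {W₀ : Set B} {X Y Z₀ : B} (hZ₀ : Z₀ ∈ W₀) (p : X ⟶ Z₀)
    (q : Z₀ ⟶ Y) {f : X ⟶ Y} (hf : f = p ≫ q) : f ∈ wIdeal W₀ X Y :=
  AddSubgroup.subset_closure ⟨Z₀, hZ₀, p, q, hf⟩

include twin

lemma W_addClosed : AddClosed (T ∩ U : Set B) :=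
  ⟨fun Z hZ => ⟨twin.fst.addV.zero_mem Z hZ, twin.snd.addU.zero_mem Z hZ⟩,
   fun X Y hX hY => ⟨twin.fst.addV.biprod_mem X Y hX.1 hY.1,
     twin.snd.addU.biprod_mem X Y hX.2 hY.2⟩,
   fun X Y hY s r hsr => ⟨twin.fst.addV.summand_mem X Y hY.1 s r hsr,
     twin.snd.addU.summand_mem X Y hY.2 s r hsr⟩⟩

/-- Construction of cokernel data in the heart. -/
theorem cokernel_construction {B₁ B₂ : B} (hB₁ : B₁ ∈ σ.tHeartSet S T U V)
    (hB₂ : B₂ ∈ σ.tHeartSet S T U V) (f : B₁ ⟶ B₂) :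
    ∃ (Z : B) (c : B₂ ⟶ Z), Z ∈ σ.tHeartSet S T U V ∧
      f ≫ c ∈ wIdeal (T ∩ U : Set B) B₁ Z ∧
      (∀ (Y : B), Y ∈ σ.tHeartSet S T U V → ∀ g : B₂ ⟶ Y,
        f ≫ g ∈ wIdeal (T ∩ U : Set B) B₁ Y →
        ∃ φ : Z ⟶ Y, g - c ≫ φ ∈ wIdeal (T ∩ U : Set B) B₂ Y) ∧
      (∀ (Y : B), Y ∈ σ.tHeartSet S T U V → ∀ ψ : Z ⟶ Y,
        c ≫ ψ ∈ wIdeal (T ∩ U : Set B) B₂ Y → ψ ∈ wIdeal (T ∩ U : Set B) Z Y) := by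
  obtain ⟨W₀, S₀, w, y₀, hW₀, hS₀, δ₀, hre₀⟩ := hB₁.2
  obtain ⟨M, m, e, hm, μ, hconfM, hextra, hrel, hrel2⟩ := σ.pushout_data hre₀ f
  have hMneg : M ∈ σ.tNeg S T U := σ.tNeg_extension twin hconfM hB₂.2 hS₀
  obtain ⟨Z, S₁, z, sz, δZ, hz, hS₁, hZpos, hsurj⟩ := σ.reflection_exists twin M
  have hZneg : Z ∈ σ.tNeg S T U := σ.tNeg_extension twin hz hMneg hS₁
  refine ⟨Z, m ≫ z, ⟨hZpos, hZneg⟩, ?_, ?_, ?_⟩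
  · -- f ≫ m ≫ z factors through W₀
    refine mem_wIdeal_of_factor hW₀ (-w) (hm ≫ z) ?_
    rw [← Category.assoc, hrel]
    simp
  · -- existence of factorizations
    intro Y hY g hfg
    rw [mem_wIdeal_iff_of_addClosed (σ.W_addClosed twin)] at hfg
    obtain ⟨W₅, hW₅, p, q, hpq⟩ := hfg
    have hobs : σ.push (-(p ≫ q)) δ₀ = 0 := by
      rw [push_neg_mor, ← push_push, twin.fst.ext_vanish hS₀ hW₅.1 (σ.push p δ₀),
        push_zero, neg_zero]
    obtain ⟨G₂, hG₂⟩ := σ.exists_ext_of_push_eq_zero hre₀ _ hobs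
    have hzero : biprod.lift f w ≫ biprod.desc g G₂ = 0 := by
      rw [biprod.lift_desc, hG₂, hpq]; abel
    obtain ⟨g₁, hg₁⟩ := σ.weak_coker hextra _ hzero
    have hmg₁ : m ≫ g₁ = g := by
      have := congrArg (fun k => (biprod.inl : B₂ ⟶ B₂ ⊞ W₀) ≫ k) hg₁
      simp only [← Category.assoc, biprod.inl_desc] at this
      exact this
    obtain ⟨φ, hφ⟩ := σ.factor_through_reflection twin hz hS₁ hsurj hY.1 g₁
    refine ⟨φ, ?_⟩
    have : g - (m ≫ z) ≫ φ = 0 := by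
      rw [Category.assoc, hφ, hmg₁, sub_self]
    rw [this]
    exact zero_mem _
  · -- uniqueness
    intro Y hY ψ hψ
    rw [mem_wIdeal_iff_of_addClosed (σ.W_addClosed twin)] at hψ
    obtain ⟨W₆, hW₆, p, q, hpq⟩ := hψ
    obtain ⟨Vy, Wy, vy, π, hVy, hWy, ρ, hreρ⟩ := hY.1
    -- step 1 : z ≫ ψ lies in the ideal
    have hobs : σ.push p (-(σ.push f δ₀)) = 0 := by
      rw [twin.fst.ext_vanish hS₀ hW₆.1 (σ.push p (-(σ.push f δ₀)))]
    obtain ⟨p', hp'⟩ := σ.exists_ext_of_push_eq_zero hconfM p hobs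
    have hzero : m ≫ (z ≫ ψ - p' ≫ q) = 0 := by
      rw [Preadditive.comp_sub,
        show m ≫ p' ≫ q = p ≫ q by rw [← Category.assoc, hp'],
        show m ≫ z ≫ ψ = p ≫ q by rw [← Category.assoc]; exact hpq, sub_self]
    obtain ⟨t, ht⟩ := σ.weak_coker hconfM _ hzero
    have htlift : σ.pull t ρ = 0 := twin.ext_SV hS₀ hVy _
    obtain ⟨t', ht'⟩ := σ.exists_lift_of_pull_eq_zero hreρ t htlift
    have h1 : e ≫ (t' ≫ π) = z ≫ ψ - p' ≫ q := by rw [ht']; exact ht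
    have hκ : z ≫ ψ = e ≫ (t' ≫ π) + p' ≫ q := sub_eq_iff_eq_add.mp h1.symm
    -- step 2 : conclude ψ lies in the ideal
    have hκI : z ≫ ψ ∈ wIdeal (T ∩ U : Set B) M Y := by
      rw [hκ]
      refine add_mem ?_ (mem_wIdeal_of_factor hW₆ p' q rfl)
      exact mem_wIdeal_of_factor hWy (e ≫ t') π (by rw [Category.assoc])
    rw [mem_wIdeal_iff_of_addClosed (σ.W_addClosed twin)] at hκI
    obtain ⟨W₇, hW₇, r, s', hrs⟩ := hκI
    have hobs2 : σ.push r δZ = 0 := twin.fst.ext_vanish hS₁ hW₇.1 _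
    obtain ⟨r', hr'⟩ := σ.exists_ext_of_push_eq_zero hz r hobs2
    have hzero2 : z ≫ (ψ - r' ≫ s') = 0 := by
      rw [Preadditive.comp_sub,
        show z ≫ r' ≫ s' = r ≫ s' by rw [← Category.assoc, hr'], ← hrs, sub_self]
    obtain ⟨t₂, ht₂⟩ := σ.weak_coker hz _ hzero2
    have ht₂lift : σ.pull t₂ ρ = 0 := twin.ext_SV hS₁ hVy _
    obtain ⟨t₂', ht₂'⟩ := σ.exists_lift_of_pull_eq_zero hreρ t₂ ht₂lift
    have h2 : sz ≫ (t₂' ≫ π) = ψ - r' ≫ s' := by rw [ht₂']; exact ht₂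
    have hfinal : ψ = sz ≫ (t₂' ≫ π) + r' ≫ s' := sub_eq_iff_eq_add.mp h2.symm
    rw [hfinal]
    refine add_mem ?_ (mem_wIdeal_of_factor hW₇ r' s' rfl)
    exact mem_wIdeal_of_factor hWy (sz ≫ t₂') π (by rw [Category.assoc])

/-- Construction of kernel data in the heart. -/
theorem kernel_construction {B₁ B₂ : B} (hB₁ : B₁ ∈ σ.tHeartSet S T U V)
    (hB₂ : B₂ ∈ σ.tHeartSet S T U V) (f : B₁ ⟶ B₂) :
    ∃ (Zk : B) (k : Zk ⟶ B₁), Zk ∈ σ.tHeartSet S T U V ∧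
      k ≫ f ∈ wIdeal (T ∩ U : Set B) Zk B₂ ∧
      (∀ (Y : B), Y ∈ σ.tHeartSet S T U V → ∀ g : Y ⟶ B₁,
        g ≫ f ∈ wIdeal (T ∩ U : Set B) Y B₂ →
        ∃ φ : Y ⟶ Zk, g - φ ≫ k ∈ wIdeal (T ∩ U : Set B) Y B₁) ∧
      (∀ (Y : B), Y ∈ σ.tHeartSet S T U V → ∀ ψ : Y ⟶ Zk,
        ψ ≫ k ∈ wIdeal (T ∩ U : Set B) Y B₁ → ψ ∈ wIdeal (T ∩ U : Set B) Y Zk) := by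
  obtain ⟨V₂, W₂, v₂, π₂, hV₂, hW₂, ρ₂, hreρ₂⟩ := hB₂.1
  obtain ⟨K, mk, e, hk, μ, hconfK, hextra, hrel, hrel2⟩ := σ.pullback_data hreρ₂ f
  have hKpos : K ∈ σ.tPos T U V := σ.tPos_extension twin hconfK hV₂ hB₁.1
  obtain ⟨Zk, V₁, v, d, νb, hν, hV₁, hZneg, hcosurj⟩ := σ.coreflection_exists twin K
  have hZpos : Zk ∈ σ.tPos T U V := σ.tPos_extension twin hν hV₁ hKpos
  refine ⟨Zk, d ≫ e, ⟨hZpos, hZneg⟩, ?_, ?_, ?_⟩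
  · refine mem_wIdeal_of_factor hW₂ (-(d ≫ hk)) π₂ ?_
    have h0 : (d ≫ hk) ≫ π₂ = -(d ≫ e ≫ f) := by
      rw [Category.assoc, hrel]; simp
    rw [Preadditive.neg_comp, h0, neg_neg, Category.assoc]
  · intro Y hY g hgf
    rw [mem_wIdeal_iff_of_addClosed (σ.W_addClosed twin)] at hgf
    obtain ⟨W₅, hW₅, p, q, hpq⟩ := hgf
    have hobs : σ.pull q ρ₂ = 0 := twin.snd.ext_vanish hW₅.2 hV₂ _
    obtain ⟨q', hq'⟩ := σ.exists_lift_of_pull_eq_zero hreρ₂ q hobs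
    have hzero : biprod.lift (-(p ≫ q')) g ≫ biprod.desc π₂ f = 0 := by
      rw [biprod.lift_desc, hpq, Preadditive.neg_comp, Category.assoc, hq']
      abel
    obtain ⟨t₁, ht₁⟩ := σ.weak_ker hextra _ hzero
    have ht₁e : t₁ ≫ e = g := by
      have := congrArg (fun k => k ≫ (biprod.snd : W₂ ⊞ B₁ ⟶ B₁)) ht₁
      simpa using this
    obtain ⟨ψ, hψ⟩ := σ.factor_through_coreflection twin hν hV₁ hcosurj hY.2 t₁
    refine ⟨ψ, ?_⟩
    have : g - ψ ≫ d ≫ e = 0 := by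
      rw [← Category.assoc, hψ, ht₁e, sub_self]
    rw [this]
    exact zero_mem _
  · intro Y hY ψ hψ
    rw [mem_wIdeal_iff_of_addClosed (σ.W_addClosed twin)] at hψ
    obtain ⟨W₆, hW₆, p, q, hpq⟩ := hψ
    obtain ⟨Wy, Sy, wy, yy, hWy, hSy, δY, hreY⟩ := hY.2
    have hobs : σ.pull q (-(σ.pull f ρ₂)) = 0 := by
      rw [twin.snd.ext_vanish hW₆.2 hV₂ (σ.pull q (-(σ.pull f ρ₂)))]
    obtain ⟨q', hq'⟩ := σ.exists_lift_of_pull_eq_zero hconfK q hobs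
    have hzero : (ψ ≫ d - p ≫ q') ≫ e = 0 := by
      rw [Preadditive.sub_comp,
        show (p ≫ q') ≫ e = p ≫ q by rw [Category.assoc, hq'],
        show (ψ ≫ d) ≫ e = p ≫ q by rw [Category.assoc]; exact hpq,
        sub_self]
    obtain ⟨t, ht⟩ := σ.weak_ker hconfK _ hzero
    have htext : σ.push t δY = 0 := twin.ext_SV hSy hV₂ _
    obtain ⟨t', ht'⟩ := σ.exists_ext_of_push_eq_zero hreY t htext
    have hκI : ψ ≫ d ∈ wIdeal (T ∩ U : Set B) Y K := by
      have h1 : wy ≫ (t' ≫ mk) = ψ ≫ d - p ≫ q' := by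
        rw [← Category.assoc, ht']; exact ht
      have hκ : ψ ≫ d = wy ≫ (t' ≫ mk) + p ≫ q' := sub_eq_iff_eq_add.mp h1.symm
      rw [hκ]
      refine add_mem ?_ (mem_wIdeal_of_factor hW₆ p q' rfl)
      exact mem_wIdeal_of_factor hWy wy (t' ≫ mk) rfl
    rw [mem_wIdeal_iff_of_addClosed (σ.W_addClosed twin)] at hκI
    obtain ⟨W₇, hW₇, r, s', hrs⟩ := hκI
    have hobs2 : σ.pull s' νb = 0 := twin.snd.ext_vanish hW₇.2 hV₁ _
    obtain ⟨s'', hs''⟩ := σ.exists_lift_of_pull_eq_zero hν s' hobs2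
    have hzero2 : (ψ - r ≫ s'') ≫ d = 0 := by
      rw [Preadditive.sub_comp,
        show (r ≫ s'') ≫ d = r ≫ s' by rw [Category.assoc, hs''], ← hrs, sub_self]
    obtain ⟨t₂, ht₂⟩ := σ.weak_ker hν _ hzero2
    have ht₂ext : σ.push t₂ δY = 0 := twin.ext_SV hSy hV₁ _
    obtain ⟨t₂', ht₂'⟩ := σ.exists_ext_of_push_eq_zero hreY t₂ ht₂ext
    have h2 : wy ≫ (t₂' ≫ v) = ψ - r ≫ s'' := by
      rw [← Category.assoc, ht₂']; exact ht₂
    have hfinal : ψ = wy ≫ (t₂' ≫ v) + r ≫ s'' := sub_eq_iff_eq_add.mp h2.symm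
    rw [hfinal]
    refine add_mem ?_ (mem_wIdeal_of_factor hW₇ r s'' rfl)
    exact mem_wIdeal_of_factor hWy wy (t₂' ≫ v) rfl

end ExtStruct

end Devel10
section Devel11

open ZeroObject

variable {B : Type u} [Category.{v} B] [Preadditive B] [HasFiniteBiproducts B]

instance toQuot_additive (W₀ : Set B) : (toQuot W₀).Additive := { map_add := rfl }

lemma toQuot_map_eq_zero_iff (W₀ : Set B) {A A' : B} (g : A ⟶ A') :
    (toQuot W₀).map g = 0 ↔ g ∈ wIdeal W₀ A A' := by
  rw [show (0 : (toQuot W₀).obj A ⟶ (toQuot W₀).obj A') = (toQuot W₀).map 0 from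
    (Functor.map_zero _ _ _).symm, Quotient.functor_map_eq_iff]
  show g - 0 ∈ wIdeal W₀ A A' ↔ _
  rw [sub_zero]

lemma toQuot_map_eq_iff (W₀ : Set B) {A A' : B} (g g' : A ⟶ A') :
    (toQuot W₀).map g = (toQuot W₀).map g' ↔ g - g' ∈ wIdeal W₀ A A' :=
  Quotient.functor_map_eq_iff _ _ _

namespace ExtStruct

variable (σ : ExtStruct B) {S T U V : Set B} (twin : σ.IsTwinCotorsionPair S T U V)
include twin

theorem tHeart_hasKernels : HasKernels (σ.THeart S T U V) := by
  constructor
  intro X Y f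
  obtain ⟨f₀, hf⟩ := Quot.exists_rep f.hom
  have hf : (toQuot (T ∩ U : Set B)).map f₀ = f.hom := hf
  obtain ⟨Zk, k, hZk, hkf, hex, huniq⟩ := σ.kernel_construction twin X.property Y.property f₀
  let K : σ.THeart S T U V := ⟨(toQuot (T ∩ U : Set B)).obj Zk, hZk⟩
  let ι : K ⟶ X := ⟨(toQuot (T ∩ U : Set B)).map k⟩
  have hcond : ι ≫ f = 0 := by
    ext
    show (toQuot (T ∩ U : Set B)).map k ≫ f.hom = 0
    rw [← hf, ← Functor.map_comp]
    exact (toQuot_map_eq_zero_iff _ _).mpr hkf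
  have key : ∀ (Q : σ.THeart S T U V) (t : Q ⟶ X), t ≫ f = 0 →
      ∃ l : Q ⟶ K, l ≫ ι = t := by
    intro Q t ht
    obtain ⟨t₀, ht₀⟩ := Quot.exists_rep t.hom
    have ht₀ : (toQuot (T ∩ U : Set B)).map t₀ = t.hom := ht₀
    have htf : t₀ ≫ f₀ ∈ wIdeal (T ∩ U : Set B) Q.obj.as Y.obj.as := by
      rw [← toQuot_map_eq_zero_iff (T ∩ U : Set B), Functor.map_comp, ht₀, hf]
      exact congrArg (fun g => g.hom) ht
    obtain ⟨φ, hφ⟩ := hex Q.obj.as Q.property t₀ htf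
    refine ⟨⟨(toQuot (T ∩ U : Set B)).map φ⟩, ?_⟩
    ext
    show (toQuot (T ∩ U : Set B)).map φ ≫ (toQuot (T ∩ U : Set B)).map k = t.hom
    rw [← Functor.map_comp, ← ht₀, toQuot_map_eq_iff]
    simpa using neg_mem hφ
  have key2 : ∀ (Q : σ.THeart S T U V) (m : Q ⟶ K), m ≫ ι = 0 → m = 0 := by
    intro Q m hm
    obtain ⟨m₀, hm₀⟩ := Quot.exists_rep m.hom
    have hm₀ : (toQuot (T ∩ U : Set B)).map m₀ = m.hom := hm₀
    have h1 : m₀ ≫ k ∈ wIdeal (T ∩ U : Set B) Q.obj.as X.obj.as := by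
      rw [← toQuot_map_eq_zero_iff (T ∩ U : Set B), Functor.map_comp, hm₀]
      exact congrArg (fun g => g.hom) hm
    have h2 := huniq Q.obj.as Q.property m₀ h1
    ext
    show m.hom = 0
    rw [← hm₀]
    exact (toQuot_map_eq_zero_iff _ _).mpr h2
  refine HasLimit.mk ⟨KernelFork.ofι ι hcond, ?_⟩
  refine Fork.IsLimit.mk _
    (fun s => (key s.pt (Fork.ι s) (KernelFork.condition s)).choose)
    (fun s => (key s.pt (Fork.ι s) (KernelFork.condition s)).choose_spec)
    (fun s m hm => ?_)
  have hspec := (key s.pt (Fork.ι s) (KernelFork.condition s)).choose_spec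
  have hm' : m ≫ ι = Fork.ι s := hm
  have hdiff : ((show s.pt ⟶ K from m) - (key s.pt (Fork.ι s) (KernelFork.condition s)).choose) ≫ ι
      = 0 := by
    rw [Preadditive.sub_comp, hm', hspec, sub_self]
  have := key2 _ _ hdiff
  rwa [sub_eq_zero] at this

theorem tHeart_hasCokernels : HasCokernels (σ.THeart S T U V) := by
  constructor
  intro X Y f
  obtain ⟨f₀, hf⟩ := Quot.exists_rep f.hom
  have hf : (toQuot (T ∩ U : Set B)).map f₀ = f.hom := hf
  obtain ⟨Z, c, hZ, hfc, hex, huniq⟩ := σ.cokernel_construction twin X.property Y.property f₀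
  let Ck : σ.THeart S T U V := ⟨(toQuot (T ∩ U : Set B)).obj Z, hZ⟩
  let π : Y ⟶ Ck := ⟨(toQuot (T ∩ U : Set B)).map c⟩
  have hcond : f ≫ π = 0 := by
    have hc0 : (toQuot (T ∩ U : Set B)).map f₀ ≫ (toQuot (T ∩ U : Set B)).map c = 0 := by
      rw [← Functor.map_comp]
      exact (toQuot_map_eq_zero_iff _ _).mpr hfc
    ext
    show f.hom ≫ (toQuot (T ∩ U : Set B)).map c = 0
    rw [← hf]
    exact hc0
  have key : ∀ (Q : σ.THeart S T U V) (t : Y ⟶ Q), f ≫ t = 0 →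
      ∃ l : Ck ⟶ Q, π ≫ l = t := by
    intro Q t ht
    obtain ⟨t₀, ht₀⟩ := Quot.exists_rep t.hom
    have ht₀ : (toQuot (T ∩ U : Set B)).map t₀ = t.hom := ht₀
    have htf : f₀ ≫ t₀ ∈ wIdeal (T ∩ U : Set B) X.obj.as Q.obj.as := by
      rw [← toQuot_map_eq_zero_iff (T ∩ U : Set B), Functor.map_comp, ht₀, hf]
      exact congrArg (fun g => g.hom) ht
    obtain ⟨φ, hφ⟩ := hex Q.obj.as Q.property t₀ htf
    refine ⟨⟨(toQuot (T ∩ U : Set B)).map φ⟩, ?_⟩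
    ext
    show (toQuot (T ∩ U : Set B)).map c ≫ (toQuot (T ∩ U : Set B)).map φ = t.hom
    rw [← Functor.map_comp, ← ht₀, toQuot_map_eq_iff]
    simpa using neg_mem hφ
  have key2 : ∀ (Q : σ.THeart S T U V) (m : Ck ⟶ Q), π ≫ m = 0 → m = 0 := by
    intro Q m hm
    obtain ⟨m₀, hm₀⟩ := Quot.exists_rep m.hom
    have hm₀ : (toQuot (T ∩ U : Set B)).map m₀ = m.hom := hm₀
    have h1 : c ≫ m₀ ∈ wIdeal (T ∩ U : Set B) Y.obj.as Q.obj.as := by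
      rw [← toQuot_map_eq_zero_iff (T ∩ U : Set B), Functor.map_comp, hm₀]
      exact congrArg (fun g => g.hom) hm
    have h2 := huniq Q.obj.as Q.property m₀ h1
    ext
    show m.hom = 0
    rw [← hm₀]
    exact (toQuot_map_eq_zero_iff _ _).mpr h2
  refine HasColimit.mk ⟨CokernelCofork.ofπ π hcond, ?_⟩
  refine Cofork.IsColimit.mk _
    (fun s => (key s.pt (Cofork.π s) (CokernelCofork.condition s)).choose)
    (fun s => (key s.pt (Cofork.π s) (CokernelCofork.condition s)).choose_spec)
    (fun s m hm => ?_)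
  have hspec := (key s.pt (Cofork.π s) (CokernelCofork.condition s)).choose_spec
  have hm' : π ≫ m = Cofork.π s := hm
  have hdiff : π ≫ ((show Ck ⟶ s.pt from m) - (key s.pt (Cofork.π s) (CokernelCofork.condition s)).choose)
      = 0 := by
    rw [Preadditive.comp_sub, hm', hspec, sub_self]
  have := key2 _ _ hdiff
  rwa [sub_eq_zero] at this

end ExtStruct

end Devel11

/-- Proposition 2.21 / `C15`. The heart `H̄ = (B⁺ ∩ B⁻)/W` of a twin
cotorsion pair is preabelian: it is an additive category (it carries the canonical
preadditive structure of a subquotient of `B`) in which every morphism has a kernel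
and a cokernel. -/
theorem statement_5 {B : Type u} [Category.{v} B] [Preadditive B] [HasFiniteBiproducts B]
    (σ : ExtStruct B) {S T U V : Set B} (twin : σ.IsTwinCotorsionPair S T U V) :
    HasKernels (σ.THeart S T U V) ∧ HasCokernels (σ.THeart S T U V) :=
  ⟨σ.tHeart_hasKernels twin, σ.tHeart_hasCokernels twin⟩

end ExtriHearts
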